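/- arXiv:1212.0935 — 5 statements merged into one kernel-verified Lean document; each statement's English description precedes it below -/
import Mathlib

section
/- Let G be a finite directed acyclic graph satisfying the ant-conservation condition with sources s_1, …, s_k and destinations t_1, …, t_k. Then the edge set of G can be partitioned into the edge sets of k pairwise edge-disjoint directed paths P_1, …, P_k, each going from a source to a destination, such that each source s_i is the starting vertex of exactly outdeg(s_i) of the paths and each destination t_j is the ending vertex of exactly indeg(t_j) of the paths. In particular, the greedy algorithm, which repeatedly removes a source-to-destination path, always terminates with k edge-disjoint paths. -/
/-! Common setup: finite directed graphs as finsets of ordered pairs of vertices. -/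

/-- The list of edges of a path given as a list of vertices. -/
def pathEdges {V : Type} (p : List V) : List (V × V) := p.zip p.tail

/-- `p` is a directed path in the graph with edge set `E`: a nonempty sequence of
pairwise-distinct vertices in which consecutive vertices are joined by edges of `E`. -/
def IsPath {V : Type} [DecidableEq V] (E : Finset (V × V)) (p : List V) : Prop :=
  p ≠ [] ∧ p.Nodup ∧ p.Chain' (fun u v => (u, v) ∈ E)

/-- `p` is a directed path in `E` from `a` to `b`. -/
def IsPathFrom {V : Type} [DecidableEq V] (E : Finset (V × V)) (p : List V) (a b : V) : Prop :=
  IsPath E p ∧ p.head? = some a ∧ p.getLast? = some b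

/-- The indegree of vertex `v`. -/
def indeg {V : Type} [DecidableEq V] (E : Finset (V × V)) (v : V) : ℕ :=
  (E.filter (fun e => e.2 = v)).card

/-- The outdegree of vertex `v`. -/
def outdeg {V : Type} [DecidableEq V] (E : Finset (V × V)) (v : V) : ℕ :=
  (E.filter (fun e => e.1 = v)).card

/-- A directed cycle: a sequence `v₀, v₁, …, v_ℓ = v₀` with `ℓ ≥ 1` and all
`(v_j, v_{j+1})` edges. -/
def IsCycle {V : Type} [DecidableEq V] (E : Finset (V × V)) (p : List V) : Prop :=
  2 ≤ p.length ∧ p.Chain' (fun u v => (u, v) ∈ E) ∧ p.head? = p.getLast?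

/-- The graph is acyclic: it contains no directed cycle. -/
def Acyclic {V : Type} [DecidableEq V] (E : Finset (V × V)) : Prop :=
  ∀ p : List V, ¬ IsCycle E p

/-- The ant-conservation condition for a directed graph with edge set `E`, with `k`
distinguished sources `s 1, …, s k` (exactly the vertices of indegree 0) and `k`
distinguished destinations `t 1, …, t k` (exactly the vertices of outdegree 0):
`Σᵢ outdeg (s i) = Σᵢ indeg (t i) = k`, and `indeg v = outdeg v` for every
intermediate vertex `v`. -/
structure AntConservation {V : Type} [DecidableEq V]
    (E : Finset (V × V)) (k : ℕ) (s t : Fin k → V) : Prop where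
  s_inj : Function.Injective s
  t_inj : Function.Injective t
  sources : ∀ v, indeg E v = 0 ↔ ∃ i, s i = v
  dests : ∀ v, outdeg E v = 0 ↔ ∃ i, t i = v
  out_sum : ∑ i, outdeg E (s i) = k
  in_sum : ∑ i, indeg E (t i) = k
  conserve : ∀ v, (¬ ∃ i, s i = v) → (¬ ∃ i, t i = v) → indeg E v = outdeg E v

/-- The paths `P 1, …, P k` are pairwise edge-disjoint. -/
def EdgeDisjoint {V : Type} {k : ℕ} (P : Fin k → List V) : Prop :=
  ∀ i j, i ≠ j → ∀ e, e ∈ pathEdges (P i) → e ∉ pathEdges (P j)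

/-- The total weight of the edges of a path under an edge-weight function. -/
def listWeight {V : Type} (wt : V × V → ℕ) (p : List V) : ℕ :=
  ((pathEdges p).map wt).sum

set_option linter.unusedSectionVars false
namespace Ants
variable {V : Type} [DecidableEq V]

theorem pathEdges_cons₂ (x y : V) (l : List V) :
    pathEdges (x :: y :: l) = (x, y) :: pathEdges (y :: l) := rfl

theorem pathEdges_nil : pathEdges ([] : List V) = [] := rfl
theorem pathEdges_single (x : V) : pathEdges [x] = [] := rfl

theorem pathEdges_subset {E : Finset (V × V)} :
    ∀ {p : List V}, p.Chain' (fun u v => (u, v) ∈ E) → ∀ e ∈ pathEdges p, e ∈ E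
  | [], _, e, he => by simp [pathEdges_nil] at he
  | [x], _, e, he => by simp [pathEdges_single] at he
  | x :: y :: l, h, e, he => by
    rw [pathEdges_cons₂] at he
    rcases List.isChain_cons_cons.1 h with ⟨h1, h2⟩
    rcases List.mem_cons.1 he with he | he
    · exact he ▸ h1
    · exact pathEdges_subset h2 e he

theorem mem_of_mem_pathEdges : ∀ {p : List V} {e : V × V}, e ∈ pathEdges p →
    e.1 ∈ p ∧ e.2 ∈ p
  | [], e, he => by simp [pathEdges_nil] at he
  | [x], e, he => by simp [pathEdges_single] at he
  | x :: y :: l, e, he => by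
    rw [pathEdges_cons₂] at he
    rcases List.mem_cons.1 he with he | he
    · subst he; simp
    · have := mem_of_mem_pathEdges he
      exact ⟨List.mem_cons_of_mem _ this.1, List.mem_cons_of_mem _ this.2⟩

theorem map_snd_pathEdges : ∀ p : List V, (pathEdges p).map Prod.snd = p.tail
  | [] => rfl
  | [x] => rfl
  | x :: y :: l => by
    rw [pathEdges_cons₂, List.map_cons, map_snd_pathEdges (y :: l)]; rfl

theorem map_fst_pathEdges : ∀ p : List V, (pathEdges p).map Prod.fst = p.dropLast
  | [] => rfl
  | [x] => rfl
  | x :: y :: l => by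
    rw [pathEdges_cons₂, List.map_cons, map_fst_pathEdges (y :: l)]
    rfl

theorem pathEdges_nodup {p : List V} (h : p.Nodup) : (pathEdges p).Nodup := by
  have h1 : ((pathEdges p).map Prod.fst).Nodup := by
    rw [map_fst_pathEdges]; exact h.sublist (List.dropLast_sublist p)
  exact h1.of_map _

end Ants
namespace Ants
variable {V : Type} [DecidableEq V]

theorem count_tail_cons (x : V) (l : List V) (hnd : (x :: l).Nodup) (v : V) :
    l.count v = if v ∈ x :: l ∧ v ≠ x then 1 else 0 := by
  have hnl : l.Nodup := hnd.of_cons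
  have hal : x ∉ l := (List.nodup_cons.1 hnd).1
  by_cases hv : v ∈ l
  · have hvx : v ≠ x := fun h => hal (h ▸ hv)
    simp [List.count_eq_one_of_mem hnl hv, hv, hvx]
  · rw [List.count_eq_zero_of_not_mem hv]
    have : ¬ (v ∈ x :: l ∧ v ≠ x) := by
      rintro ⟨h1, h2⟩
      rcases List.mem_cons.1 h1 with h | h
      · exact h2 h
      · exact hv h
    simp only [List.mem_cons] at this
    simp only [List.mem_cons]
    rw [if_neg this]

theorem count_tail_of_head {p : List V} (hnd : p.Nodup) {a v : V} (ha : p.head? = some a) :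
    p.tail.count v = if v ∈ p ∧ v ≠ a then 1 else 0 := by
  rcases p with _ | ⟨x, l⟩
  · simp at ha
  · have hx : a = x := by simpa using ha.symm
    rw [hx, List.tail_cons]
    exact count_tail_cons x l hnd v

theorem count_dropLast_of_getLast {p : List V} (hnd : p.Nodup) {b v : V}
    (hb : p.getLast? = some b) :
    p.dropLast.count v = if v ∈ p ∧ v ≠ b then 1 else 0 := by
  have hne : p ≠ [] := by rintro rfl; simp at hb
  have hb' : p.getLast hne = b := by
    have := List.getLast?_eq_getLast hne
    rw [this] at hb; exact Option.some_injective _ hb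
  have hsplit : p.dropLast ++ [b] = p := by
    rw [← hb']; exact List.dropLast_append_getLast hne
  have hnd' : (p.dropLast ++ [b]).Nodup := by rw [hsplit]; exact hnd
  have hdl : p.dropLast.Nodup := hnd'.of_append_left
  have hbd : b ∉ p.dropLast := by
    intro h
    have := List.disjoint_of_nodup_append hnd' h
    simp at this
  by_cases hv : v ∈ p.dropLast
  · have hvb : v ≠ b := fun h => hbd (h ▸ hv)
    have hvp : v ∈ p := by rw [← hsplit]; exact List.mem_append_left _ hv
    simp [List.count_eq_one_of_mem hdl hv, hvp, hvb]
  · rw [List.count_eq_zero_of_not_mem hv]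
    have : ¬ (v ∈ p ∧ v ≠ b) := by
      rintro ⟨h1, h2⟩
      rw [← hsplit] at h1
      rcases List.mem_append.1 h1 with h | h
      · exact hv h
      · simp at h; exact h2 h
    simp [this]

theorem card_filter_toFinset_eq (l : List (V × V)) (hl : l.Nodup) (q : V × V → Prop)
    [DecidablePred q] :
    (l.toFinset.filter q).card = l.countP (fun e => decide (q e)) := by
  have h1 : l.toFinset.filter q = (l.filter (fun e => decide (q e))).toFinset := by
    ext e; simp [List.mem_filter]
  rw [h1, List.card_toFinset, (hl.filter _).dedup, List.countP_eq_length_filter]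

theorem card_filter_snd_pathEdges (p : List V) (hnd : p.Nodup) (v : V) :
    ((pathEdges p).toFinset.filter (fun e => e.2 = v)).card = p.tail.count v := by
  rw [card_filter_toFinset_eq _ (pathEdges_nodup hnd)]
  rw [← map_snd_pathEdges, List.count, List.countP_map]
  rfl

theorem card_filter_fst_pathEdges (p : List V) (hnd : p.Nodup) (v : V) :
    ((pathEdges p).toFinset.filter (fun e => e.1 = v)).card = p.dropLast.count v := by
  rw [card_filter_toFinset_eq _ (pathEdges_nodup hnd)]
  rw [← map_fst_pathEdges, List.count, List.countP_map]
  rfl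

theorem indeg_sdiff (E S : Finset (V × V)) (h : S ⊆ E) (v : V) :
    indeg (E \ S) v = indeg E v - (S.filter (fun e => e.2 = v)).card := by
  unfold indeg
  have he : (E \ S).filter (fun e => e.2 = v) =
      E.filter (fun e => e.2 = v) \ S.filter (fun e => e.2 = v) := by
    ext e; simp only [Finset.mem_filter, Finset.mem_sdiff]; tauto
  rw [he, Finset.card_sdiff_of_subset (Finset.filter_subset_filter _ h)]

theorem outdeg_sdiff (E S : Finset (V × V)) (h : S ⊆ E) (v : V) :
    outdeg (E \ S) v = outdeg E v - (S.filter (fun e => e.1 = v)).card := by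
  unfold outdeg
  have he : (E \ S).filter (fun e => e.1 = v) =
      E.filter (fun e => e.1 = v) \ S.filter (fun e => e.1 = v) := by
    ext e; simp only [Finset.mem_filter, Finset.mem_sdiff]; tauto
  rw [he, Finset.card_sdiff_of_subset (Finset.filter_subset_filter _ h)]

end Ants
namespace Ants
variable {V : Type} [DecidableEq V]

theorem no_back_edge {E : Finset (V × V)} (hacyc : Acyclic E) {p : List V}
    (hch : p.Chain' (fun u v => (u, v) ∈ E)) {x u : V} (hx : p.head? = some x)
    (hu : u ∈ p) (he : (u, x) ∈ E) : False := by
  obtain ⟨l₁, l₂, rfl⟩ := List.append_of_mem hu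
  have hhead : (l₁ ++ [u]).head? = some x := by
    rcases l₁ with _ | ⟨a, l⟩
    · simpa using hx
    · simpa using hx
  have hchpre : (l₁ ++ [u]).Chain' (fun u v => (u, v) ∈ E) := by
    have : ((l₁ ++ [u]) ++ l₂).Chain' (fun u v => (u, v) ∈ E) := by
      simpa [List.append_assoc] using hch
    exact this.left_of_append
  apply hacyc (u :: (l₁ ++ [u]))
  refine ⟨by simp, ?_, ?_⟩
  · refine List.isChain_cons.2 ?_
    exact ⟨fun y hy => by rw [hhead] at hy; cases hy; exact he, hchpre⟩
  · have : (u :: (l₁ ++ [u])).getLast? = some u := by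
      rw [show u :: (l₁ ++ [u]) = (u :: l₁) ++ [u] by simp, List.getLast?_concat]
    simp [this]

theorem no_forward_edge {E : Finset (V × V)} (hacyc : Acyclic E) {p : List V}
    (hch : p.Chain' (fun u v => (u, v) ∈ E)) {y u : V} (hy : p.getLast? = some y)
    (hu : u ∈ p) (he : (y, u) ∈ E) : False := by
  obtain ⟨l₁, l₂, rfl⟩ := List.append_of_mem hu
  have hlast : (u :: l₂).getLast? = some y := by
    rw [List.getLast?_append] at hy
    rcases h : (u :: l₂).getLast? with _ | z
    · simp at h
    · rw [h] at hy; simpa using hy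
  have hchsuf : (u :: l₂).Chain' (fun u v => (u, v) ∈ E) := hch.right_of_append
  apply hacyc ((u :: l₂) ++ [u])
  refine ⟨by simp, ?_, ?_⟩
  · refine List.isChain_append.2 ?_
    refine ⟨hchsuf, List.isChain_singleton u, fun a ha b hb => ?_⟩
    rw [hlast] at ha; cases ha
    simp at hb; subst hb; exact he
  · rw [List.getLast?_concat]
    simp

theorem exists_in_edge {E : Finset (V × V)} {v : V} (h : indeg E v ≠ 0) :
    ∃ u, (u, v) ∈ E := by
  rw [indeg, Finset.card_ne_zero] at h
  obtain ⟨e, he⟩ := h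
  rw [Finset.mem_filter] at he
  exact ⟨e.1, by rw [← he.2]; exact he.1⟩

theorem exists_out_edge {E : Finset (V × V)} {v : V} (h : outdeg E v ≠ 0) :
    ∃ u, (v, u) ∈ E := by
  rw [outdeg, Finset.card_ne_zero] at h
  obtain ⟨e, he⟩ := h
  rw [Finset.mem_filter] at he
  exact ⟨e.2, by rw [← he.2]; exact he.1⟩

theorem indeg_pos_of_mem_ne_head {E : Finset (V × V)} {p : List V} {v a : V}
    (hch : p.Chain' (fun u v => (u, v) ∈ E)) (hnd : p.Nodup) (ha : p.head? = some a)
    (hv : v ∈ p) (hva : v ≠ a) : indeg E v ≠ 0 := by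
  have h1 : p.tail.count v = 1 := by
    rw [count_tail_of_head hnd ha, if_pos ⟨hv, hva⟩]
  have h2 : v ∈ p.tail := List.count_pos_iff.1 (by omega)
  rw [← map_snd_pathEdges] at h2
  obtain ⟨e, hep, he2⟩ := List.mem_map.1 h2
  have heE : e ∈ E := pathEdges_subset hch e hep
  intro h0
  rw [indeg, Finset.card_eq_zero] at h0
  have : e ∈ E.filter (fun e => e.2 = v) := Finset.mem_filter.2 ⟨heE, he2⟩
  rw [h0] at this; simp at this

theorem outdeg_pos_of_mem_ne_last {E : Finset (V × V)} {p : List V} {v b : V}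
    (hch : p.Chain' (fun u v => (u, v) ∈ E)) (hnd : p.Nodup) (hb : p.getLast? = some b)
    (hv : v ∈ p) (hvb : v ≠ b) : outdeg E v ≠ 0 := by
  have h1 : p.dropLast.count v = 1 := by
    rw [count_dropLast_of_getLast hnd hb, if_pos ⟨hv, hvb⟩]
  have h2 : v ∈ p.dropLast := List.count_pos_iff.1 (by omega)
  rw [← map_fst_pathEdges] at h2
  obtain ⟨e, hep, he1⟩ := List.mem_map.1 h2
  have heE : e ∈ E := pathEdges_subset hch e hep
  intro h0
  rw [outdeg, Finset.card_eq_zero] at h0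
  have : e ∈ E.filter (fun e => e.1 = v) := Finset.mem_filter.2 ⟨heE, he1⟩
  rw [h0] at this; simp at this

end Ants
namespace Ants
variable {V : Type} [DecidableEq V] [Fintype V]

theorem length_two_of_ne {p : List V} {a b : V} (ha : p.head? = some a)
    (hb : p.getLast? = some b) (hab : a ≠ b) : 2 ≤ p.length := by
  rcases p with _ | ⟨x, l⟩
  · simp at ha
  · rcases l with _ | ⟨y, m⟩
    · simp at ha hb; subst ha; subst hb; exact absurd rfl hab
    · simp

theorem extend_back {E : Finset (V × V)} (hacyc : Acyclic E) :
    ∀ (n : ℕ) (p : List V), Fintype.card V ≤ p.length + n → p ≠ [] → p.Nodup →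
      p.Chain' (fun u v => (u, v) ∈ E) →
      ∃ q : List V, q ≠ [] ∧ q.Nodup ∧ q.Chain' (fun u v => (u, v) ∈ E) ∧
        q.getLast? = p.getLast? ∧ ∀ x, q.head? = some x → indeg E x = 0 := by
  intro n
  induction n with
  | zero =>
    intro p hcard hne hnd hch
    obtain ⟨x, hx⟩ : ∃ x, p.head? = some x := ⟨p.head hne, List.head?_eq_head hne⟩
    by_cases h0 : indeg E x = 0
    · exact ⟨p, hne, hnd, hch, rfl, fun x' hx' => by rw [hx] at hx'; cases hx'; exact h0⟩
    · obtain ⟨u, hu⟩ := exists_in_edge h0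
      by_cases hup : u ∈ p
      · exact absurd (no_back_edge hacyc hch hx hup hu) (fun h => h)
      · exfalso
        have : (u :: p).Nodup := List.nodup_cons.2 ⟨hup, hnd⟩
        have := this.length_le_card
        simp at this; omega
  | succ n ih =>
    intro p hcard hne hnd hch
    obtain ⟨x, hx⟩ : ∃ x, p.head? = some x := ⟨p.head hne, List.head?_eq_head hne⟩
    by_cases h0 : indeg E x = 0
    · exact ⟨p, hne, hnd, hch, rfl, fun x' hx' => by rw [hx] at hx'; cases hx'; exact h0⟩
    · obtain ⟨u, hu⟩ := exists_in_edge h0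
      by_cases hup : u ∈ p
      · exact absurd (no_back_edge hacyc hch hx hup hu) (fun h => h)
      · have hnd' : (u :: p).Nodup := List.nodup_cons.2 ⟨hup, hnd⟩
        have hch' : (u :: p).Chain' (fun u v => (u, v) ∈ E) :=
          List.isChain_cons.2 ⟨fun y hy => by rw [hx] at hy; cases hy; exact hu, hch⟩
        obtain ⟨q, h1, h2, h3, h4, h5⟩ := ih (u :: p) (by simp; omega)
          (List.cons_ne_nil _ _) hnd' hch'
        refine ⟨q, h1, h2, h3, ?_, h5⟩
        rw [h4]
        rcases p with _ | ⟨y, l⟩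
        · exact absurd rfl hne
        · exact List.getLast?_cons_cons

theorem extend_front {E : Finset (V × V)} (hacyc : Acyclic E) :
    ∀ (n : ℕ) (p : List V), Fintype.card V ≤ p.length + n → p ≠ [] → p.Nodup →
      p.Chain' (fun u v => (u, v) ∈ E) →
      ∃ q : List V, q ≠ [] ∧ q.Nodup ∧ q.Chain' (fun u v => (u, v) ∈ E) ∧
        q.head? = p.head? ∧ ∀ y, q.getLast? = some y → outdeg E y = 0 := by
  intro n
  induction n with
  | zero =>
    intro p hcard hne hnd hch
    obtain ⟨y, hy⟩ : ∃ y, p.getLast? = some y := ⟨p.getLast hne, List.getLast?_eq_getLast hne⟩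
    by_cases h0 : outdeg E y = 0
    · exact ⟨p, hne, hnd, hch, rfl, fun y' hy' => by rw [hy] at hy'; cases hy'; exact h0⟩
    · obtain ⟨w, hw⟩ := exists_out_edge h0
      by_cases hwp : w ∈ p
      · exact absurd (no_forward_edge hacyc hch hy hwp hw) (fun h => h)
      · exfalso
        have : (p ++ [w]).Nodup := by
          rw [List.nodup_append]
          exact ⟨hnd, List.nodup_singleton w, fun a ha b hb h => hwp (by simp at hb; subst hb; subst h; exact ha)⟩
        have := this.length_le_card
        simp at this; omega
  | succ n ih =>
    intro p hcard hne hnd hch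
    obtain ⟨y, hy⟩ : ∃ y, p.getLast? = some y := ⟨p.getLast hne, List.getLast?_eq_getLast hne⟩
    by_cases h0 : outdeg E y = 0
    · exact ⟨p, hne, hnd, hch, rfl, fun y' hy' => by rw [hy] at hy'; cases hy'; exact h0⟩
    · obtain ⟨w, hw⟩ := exists_out_edge h0
      by_cases hwp : w ∈ p
      · exact absurd (no_forward_edge hacyc hch hy hwp hw) (fun h => h)
      · have hnd' : (p ++ [w]).Nodup := by
          rw [List.nodup_append]
          exact ⟨hnd, List.nodup_singleton w, fun a ha b hb h => hwp (by simp at hb; subst hb; subst h; exact ha)⟩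
        have hch' : (p ++ [w]).Chain' (fun u v => (u, v) ∈ E) := by
          refine List.isChain_append.2 ?_
          refine ⟨hch, List.isChain_singleton w, fun a ha b hb => ?_⟩
          rw [hy] at ha; cases ha
          simp at hb; subst hb; exact hw
        obtain ⟨q, h1, h2, h3, h4, h5⟩ := ih (p ++ [w]) (by simp; omega)
          (by simp) hnd' hch'
        refine ⟨q, h1, h2, h3, ?_, h5⟩
        rw [h4]
        rcases p with _ | ⟨z, l⟩
        · exact absurd rfl hne
        · simp

theorem exists_good_path {E : Finset (V × V)} (hacyc : Acyclic E) (hne : E.Nonempty) :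
    ∃ (p : List V) (a b : V), IsPathFrom E p a b ∧ 2 ≤ p.length ∧
      indeg E a = 0 ∧ outdeg E b = 0 := by
  obtain ⟨⟨x, y⟩, hxy⟩ := hne
  have hxyne : x ≠ y := by
    rintro rfl
    exact hacyc [x, x] ⟨by simp, by simp [List.Chain', List.isChain_cons_cons, hxy], by simp⟩
  have hnd0 : ([x, y] : List V).Nodup := by simp [hxyne]
  have hch0 : ([x, y] : List V).Chain' (fun u v => (u, v) ∈ E) := by
    simp [List.Chain', List.isChain_cons_cons, hxy]
  obtain ⟨q, hq1, hq2, hq3, hq4, hq5⟩ :=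
    extend_back hacyc (Fintype.card V) [x, y] (by simp) (by simp) hnd0 hch0
  obtain ⟨r, hr1, hr2, hr3, hr4, hr5⟩ :=
    extend_front hacyc (Fintype.card V) q (by omega) hq1 hq2 hq3
  obtain ⟨a, ha⟩ : ∃ a, r.head? = some a := ⟨r.head hr1, List.head?_eq_head hr1⟩
  obtain ⟨b, hb⟩ : ∃ b, r.getLast? = some b := ⟨r.getLast hr1, List.getLast?_eq_getLast hr1⟩
  have haq : q.head? = some a := hr4 ▸ ha
  have hia : indeg E a = 0 := hq5 a haq
  have hob : outdeg E b = 0 := hr5 b hb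
  have hqy : q.getLast? = some y := by rw [hq4]; simp
  have hiy : indeg E y ≠ 0 := by
    intro h
    rw [indeg, Finset.card_eq_zero] at h
    have : (x, y) ∈ E.filter (fun e => e.2 = y) := Finset.mem_filter.2 ⟨hxy, rfl⟩
    rw [h] at this; simp at this
  have hay : a ≠ y := fun h => hiy (h ▸ hia)
  have hq2' : 2 ≤ q.length := length_two_of_ne haq hqy hay
  have hoa : outdeg E a ≠ 0 := by
    apply outdeg_pos_of_mem_ne_last hq3 hq2 hqy _ hay
    rcases q with _ | ⟨z, l⟩
    · simp at haq
    · have : z = a := by simpa using haq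
      subst this; simp
  have hab : a ≠ b := fun h => hoa (h ▸ hob)
  exact ⟨r, a, b, ⟨⟨hr1, hr2, hr3⟩, ha, hb⟩, length_two_of_ne ha hb hab, hia, hob⟩

end Ants
namespace Ants
variable {V : Type} [DecidableEq V] [Fintype V]

theorem acyclic_subset {E E' : Finset (V × V)} (h : E' ⊆ E) (hacyc : Acyclic E) :
    Acyclic E' := fun p hp =>
  hacyc p ⟨hp.1, hp.2.1.imp (fun _ _ hx => h hx), hp.2.2⟩

theorem indeg_mono {E E' : Finset (V × V)} (h : E' ⊆ E) (v : V) :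
    indeg E' v ≤ indeg E v := Finset.card_le_card (Finset.filter_subset_filter _ h)

theorem outdeg_mono {E E' : Finset (V × V)} (h : E' ⊆ E) (v : V) :
    outdeg E' v ≤ outdeg E v := Finset.card_le_card (Finset.filter_subset_filter _ h)

theorem head_ne_last {p : List V} (hnd : p.Nodup) {a b : V} (ha : p.head? = some a)
    (hb : p.getLast? = some b) (hlen : 2 ≤ p.length) : a ≠ b := by
  rcases p with _ | ⟨x, l⟩
  · simp at ha
  · have hax : a = x := by simpa using ha.symm
    subst hax
    have hl : l ≠ [] := by rintro rfl; simp at hlen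
    have hbl : b ∈ l := by
      rcases l with _ | ⟨y, m⟩
      · simp at hl
      · rw [List.getLast?_cons_cons] at hb
        exact List.mem_of_mem_getLast? hb
    have : a ∉ l := (List.nodup_cons.1 hnd).1
    exact fun h => this (h ▸ hbl)

theorem pathEdges_ne_nil {p : List V} (hlen : 2 ≤ p.length) : pathEdges p ≠ [] := by
  rcases p with _ | ⟨x, _ | ⟨y, l⟩⟩
  · simp at hlen
  · simp at hlen
  · rw [pathEdges_cons₂]; simp

/-- The main induction: a subgraph `E'` of an acyclic graph `E`, conserving flow at all
intermediate vertices of `E`, decomposes into paths. -/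
theorem main_induction {E : Finset (V × V)} (hacyc : Acyclic E) :
    ∀ (n : ℕ) (E' : Finset (V × V)), E'.card = n → E' ⊆ E →
      (∀ v, indeg E v ≠ 0 → outdeg E v ≠ 0 → indeg E' v = outdeg E' v) →
      ∃ L : List (List V),
        (∀ q ∈ L, IsPath E' q ∧ 2 ≤ q.length ∧
          (∀ x, q.head? = some x → indeg E x = 0) ∧
          (∀ y, q.getLast? = some y → outdeg E y = 0)) ∧
        (↑((L.map pathEdges).flatten) : Multiset (V × V)) = E'.val ∧
        (∀ v, indeg E' v = 0 →
          L.countP (fun q => decide (q.head? = some v)) = outdeg E' v) ∧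
        (∀ v, outdeg E' v = 0 →
          L.countP (fun q => decide (q.getLast? = some v)) = indeg E' v) := by
  intro n
  induction n using Nat.strong_induction_on with
  | _ n ih =>
  intro E' hcard hsub hinv
  rcases Finset.eq_empty_or_nonempty E' with rfl | hne
  · refine ⟨[], by simp, by simp, ?_, ?_⟩
    · intro v _; simp [outdeg]
    · intro v _; simp [indeg]
  · -- find a path
    have hacyc' : Acyclic E' := acyclic_subset hsub hacyc
    obtain ⟨p, a, b, ⟨⟨hpne, hnd, hch⟩, ha, hb⟩, hlen, hia, hob⟩ :=
      exists_good_path hacyc' hne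
    have hab : a ≠ b := head_ne_last hnd ha hb hlen
    have hpa : a ∈ p := by
      rcases p with _ | ⟨x, l⟩
      · simp at ha
      · have : x = a := by simpa using ha
        subst this; simp
    have hpb : b ∈ p := by
      have := List.mem_of_mem_getLast? hb; exact this
    have hoa' : outdeg E' a ≠ 0 := outdeg_pos_of_mem_ne_last hch hnd hb hpa hab
    have hib' : indeg E' b ≠ 0 := indeg_pos_of_mem_ne_head hch hnd ha hpb (Ne.symm hab)
    set S : Finset (V × V) := (pathEdges p).toFinset with hS
    have hSsub : S ⊆ E' := by
      intro e he
      rw [hS, List.mem_toFinset] at he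
      exact pathEdges_subset hch e he
    set E'' : Finset (V × V) := E' \ S with hE''
    have hE''sub : E'' ⊆ E' := Finset.sdiff_subset
    -- degree formulas
    have hindeg : ∀ v, indeg E'' v = indeg E' v - (if v ∈ p ∧ v ≠ a then 1 else 0) := by
      intro v
      rw [hE'', indeg_sdiff E' S hSsub, hS, card_filter_snd_pathEdges p hnd,
        count_tail_of_head hnd ha]
    have houtdeg : ∀ v, outdeg E'' v = outdeg E' v - (if v ∈ p ∧ v ≠ b then 1 else 0) := by
      intro v
      rw [hE'', outdeg_sdiff E' S hSsub, hS, card_filter_fst_pathEdges p hnd,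
        count_dropLast_of_getLast hnd hb]
    -- source/dest of the path w.r.t. the big graph E
    have hiaE : indeg E a = 0 := by
      by_contra h
      have hoaE : outdeg E a ≠ 0 := fun h0 => hoa' (Nat.le_zero.1 (h0 ▸ outdeg_mono hsub a))
      have := hinv a h hoaE
      rw [hia] at this
      exact hoa' this.symm
    have hobE : outdeg E b = 0 := by
      by_contra h
      have hibE : indeg E b ≠ 0 := fun h0 => hib' (Nat.le_zero.1 (h0 ▸ indeg_mono hsub b))
      have := hinv b hibE h
      rw [hob] at this
      exact hib' this
    -- invariant for E''
    have hinv'' : ∀ v, indeg E v ≠ 0 → outdeg E v ≠ 0 → indeg E'' v = outdeg E'' v := by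
      intro v h1 h2
      have heq : indeg E' v = outdeg E' v := hinv v h1 h2
      have hva : v ≠ a := by rintro rfl; rw [hia] at heq; exact hoa' heq.symm
      have hvb : v ≠ b := by rintro rfl; rw [hob] at heq; exact hib' heq
      rw [hindeg, houtdeg]
      by_cases hv : v ∈ p
      · simp [hv, hva, hvb, heq]
      · simp [hv, heq]
    -- cardinality decreases
    have hcard'' : E''.card < n := by
      rw [hE'', Finset.card_sdiff_of_subset hSsub, hcard]
      have hS0 : 0 < S.card := by
        rw [hS, Finset.card_pos]
        obtain ⟨e, he⟩ := List.exists_mem_of_ne_nil _ (pathEdges_ne_nil hlen)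
        exact ⟨e, List.mem_toFinset.2 he⟩
      have hSle : S.card ≤ n := hcard ▸ Finset.card_le_card hSsub
      have hn : 0 < n := by rw [← hcard]; exact Finset.card_pos.2 hne
      omega
    obtain ⟨L'', hL1, hL2, hL3, hL4⟩ := ih E''.card hcard'' E'' rfl
      (hE''sub.trans hsub) hinv''
    refine ⟨p :: L'', ?_, ?_, ?_, ?_⟩
    · intro q hq'
      rcases List.mem_cons.1 hq' with rfl | hq
      · exact ⟨⟨hpne, hnd, hch⟩, hlen,
          fun x hx => by rw [ha] at hx; cases hx; exact hiaE,
          fun y hy => by rw [hb] at hy; cases hy; exact hobE⟩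
      · obtain ⟨⟨q1, q2, q3⟩, q4, q5, q6⟩ := hL1 q hq
        exact ⟨⟨q1, q2, q3.imp (fun _ _ hx => hE''sub hx)⟩, q4, q5, q6⟩
    · rw [List.map_cons, List.flatten_cons]
      have hsplit : (↑(pathEdges p ++ (List.map pathEdges L'').flatten) : Multiset (V × V)) =
          ↑(pathEdges p) + ↑((List.map pathEdges L'').flatten) := rfl
      rw [hsplit, hL2]
      have hval : (↑(pathEdges p) : Multiset (V × V)) = S.val := by
        rw [hS]
        have : (pathEdges p).toFinset.val = ↑((pathEdges p).dedup) := rfl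
        rw [this, List.dedup_eq_self.2 (pathEdges_nodup hnd)]
      have hE''val : E''.val = E'.val - S.val := by rw [hE'', Finset.sdiff_val]
      rw [hE''val, hval]
      exact add_tsub_cancel_of_le (Finset.val_le_iff.2 hSsub)
    · intro v hv
      rw [List.countP_cons]
      by_cases hva : v = a
      · subst hva
        have hd : (decide (p.head? = some v) : Bool) = true := by simp [ha]
        rw [hd, if_pos rfl]
        have hi'' : indeg E'' v = 0 := Nat.le_zero.1 (hv ▸ indeg_mono hE''sub v)
        rw [hL3 v hi'', houtdeg, if_pos ⟨hpa, hab⟩]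
        omega
      · have hvp : v ∉ p := fun hvm =>
          indeg_pos_of_mem_ne_head hch hnd ha hvm hva hv
        have hd : (decide (p.head? = some v) : Bool) = false := by
          rw [decide_eq_false_iff_not, ha]
          intro h
          exact hva (Option.some_injective _ h).symm
        rw [hd]
        simp only [Bool.false_eq_true, if_false, Nat.add_zero]
        have hi'' : indeg E'' v = 0 := Nat.le_zero.1 (hv ▸ indeg_mono hE''sub v)
        rw [hL3 v hi'', houtdeg]
        simp [hvp]
    · intro v hv
      rw [List.countP_cons]
      by_cases hvb : v = b
      · subst hvb
        have hd : (decide (p.getLast? = some v) : Bool) = true := by simp [hb]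
        rw [hd, if_pos rfl]
        have ho'' : outdeg E'' v = 0 := Nat.le_zero.1 (hv ▸ outdeg_mono hE''sub v)
        rw [hL4 v ho'', hindeg, if_pos ⟨hpb, Ne.symm hab⟩]
        omega
      · have hvp : v ∉ p := fun hvm =>
          outdeg_pos_of_mem_ne_last hch hnd hb hvm hvb hv
        have hd : (decide (p.getLast? = some v) : Bool) = false := by
          rw [decide_eq_false_iff_not, hb]
          intro h
          exact hvb (Option.some_injective _ h).symm
        rw [hd]
        simp only [Bool.false_eq_true, if_false, Nat.add_zero]
        have ho'' : outdeg E'' v = 0 := Nat.le_zero.1 (hv ▸ outdeg_mono hE''sub v)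
        rw [hL4 v ho'', hindeg]
        simp [hvp]
end Ants
namespace Ants

theorem card_filter_fin_eq_countP {α : Type*} (l : List α) (q : α → Prop) [DecidablePred q] :
    (Finset.univ.filter (fun i : Fin l.length => q (l.get i))).card =
      l.countP (fun x => decide (q x)) := by
  rw [Finset.card_filter]
  induction l with
  | nil => simp
  | cons a l ih =>
    rw [List.countP_cons]
    show (∑ i : Fin (l.length + 1), if q ((a :: l).get i) then 1 else 0) = _
    rw [Fin.sum_univ_succ]
    simp only [show ∀ i : Fin l.length, (a :: l).get i.succ = l.get i from fun i => rfl]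
    rw [ih]
    by_cases hq : q a
    · simp [hq, Nat.add_comm]
    · simp [hq]

theorem sum_countP_heads {V : Type} [DecidableEq V] {k : ℕ} {s : Fin k → V}
    (hs : Function.Injective s) (L : List (List V))
    (h : ∀ q ∈ L, ∃ a, q.head? = some (s a)) :
    ∑ a : Fin k, L.countP (fun p => decide (p.head? = some (s a))) = L.length := by
  induction L with
  | nil => simp
  | cons q L ih =>
    simp only [List.countP_cons]
    rw [Finset.sum_add_distrib]
    obtain ⟨a₀, ha₀⟩ := h q (List.mem_cons_self)
    have h1 : ∑ a : Fin k, (if (decide (q.head? = some (s a)) : Bool) = true then 1 else 0)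
        = 1 := by
      have : ∀ a : Fin k, ((decide (q.head? = some (s a)) : Bool) = true) ↔ a = a₀ := by
        intro a
        simp only [decide_eq_true_eq, ha₀, Option.some_inj]
        exact ⟨fun hh => hs hh.symm, fun hh => by rw [hh]⟩
      calc ∑ a : Fin k, (if (decide (q.head? = some (s a)) : Bool) = true then 1 else 0)
          = ∑ a : Fin k, if a = a₀ then 1 else 0 := by
            apply Finset.sum_congr rfl; intro a _; rw [if_congr (this a) rfl rfl]
        _ = 1 := by rw [Finset.sum_ite_eq' Finset.univ a₀ (fun _ => 1)]; simp
    rw [ih (fun q' hq' => h q' (List.mem_cons_of_mem _ hq')), h1]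
    simp [Nat.add_comm]

end Ants
/-- The edge set of a finite DAG satisfying the ant-conservation
condition can be partitioned into the edge sets of `k` pairwise edge-disjoint
source-to-destination paths, with each source `s i` the starting vertex of exactly
`outdeg (s i)` of the paths and each destination `t j` the ending vertex of exactly
`indeg (t j)` of the paths. (In particular, the greedy algorithm always terminates
with `k` edge-disjoint paths.) -/
theorem stmt4 {V : Type} [Fintype V] [DecidableEq V] (E : Finset (V × V)) (k : ℕ)
    (s t : Fin k → V) (hacyc : Acyclic E) (hac : AntConservation E k s t) :
    ∃ P : Fin k → List V,
      (∀ i, ∃ a b, IsPathFrom E (P i) (s a) (t b)) ∧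
      EdgeDisjoint P ∧
      (∀ e ∈ E, ∃ i, e ∈ pathEdges (P i)) ∧
      (∀ a : Fin k,
        (Finset.univ.filter (fun i => (P i).head? = some (s a))).card = outdeg E (s a)) ∧
      (∀ b : Fin k,
        (Finset.univ.filter (fun i => (P i).getLast? = some (t b))).card = indeg E (t b)) := by
  have hinv : ∀ v, indeg E v ≠ 0 → outdeg E v ≠ 0 → indeg E v = outdeg E v := by
    intro v h1 h2
    exact hac.conserve v (fun hi => h1 ((hac.sources v).2 hi))
      (fun hi => h2 ((hac.dests v).2 hi))
  obtain ⟨L, hL1, hL2, hL3, hL4⟩ :=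
    Ants.main_induction hacyc E.card E rfl (fun _ h => h) hinv
  have hheads : ∀ q ∈ L, ∃ a, q.head? = some (s a) := by
    intro q hq
    obtain ⟨⟨hne, _, _⟩, _, hhead, _⟩ := hL1 q hq
    obtain ⟨x, hx⟩ : ∃ x, q.head? = some x := ⟨q.head hne, List.head?_eq_head hne⟩
    obtain ⟨a, ha⟩ := (hac.sources x).1 (hhead x hx)
    exact ⟨a, by rw [hx, ha]⟩
  have klen : L.length = k := by
    have h2 : ∑ a : Fin k, L.countP (fun p => decide (p.head? = some (s a)))
        = ∑ a : Fin k, outdeg E (s a) := by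
      apply Finset.sum_congr rfl
      intro a _
      exact hL3 (s a) ((hac.sources (s a)).2 ⟨a, rfl⟩)
    rw [← hac.out_sum, ← h2]
    exact (Ants.sum_countP_heads hac.s_inj L hheads).symm
  subst klen
  refine ⟨fun i => L.get i, ?_, ?_, ?_, ?_, ?_⟩
  · intro i
    obtain ⟨⟨hne, hnd, hch⟩, _, hhead, hlast⟩ := hL1 (L.get i) (List.get_mem L i)
    obtain ⟨x, hx⟩ : ∃ x, (L.get i).head? = some x :=
      ⟨(L.get i).head hne, List.head?_eq_head hne⟩
    obtain ⟨y, hy⟩ : ∃ y, (L.get i).getLast? = some y :=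
      ⟨(L.get i).getLast hne, List.getLast?_eq_getLast hne⟩
    obtain ⟨a, ha⟩ := (hac.sources x).1 (hhead x hx)
    obtain ⟨b, hb⟩ := (hac.dests y).1 (hlast y hy)
    exact ⟨a, b, ⟨hne, hnd, hch⟩, by rw [hx, ha], by rw [hy, hb]⟩
  · have hnodup : ((L.map pathEdges).flatten).Nodup := by
      have h1 : Multiset.Nodup (↑((L.map pathEdges).flatten) : Multiset (V × V)) := by
        rw [hL2]; exact E.nodup
      exact Multiset.coe_nodup.1 h1
    rw [List.nodup_flatten] at hnodup
    have hpw := List.pairwise_iff_get.1 hnodup.2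
    intro i j hij e hei hej
    have hmlen : (L.map pathEdges).length = L.length := List.length_map _
    have hget : ∀ (i : Fin L.length) (h : i.val < (L.map pathEdges).length),
        (L.map pathEdges).get ⟨i.val, h⟩ = pathEdges (L.get i) := by
      intro i h
      show (L.map pathEdges)[i.val] = pathEdges (L.get i)
      rw [List.getElem_map]
      rfl
    rcases lt_or_gt_of_ne hij with h | h
    · exact hpw ⟨i.val, by omega⟩ ⟨j.val, by omega⟩ h
        ((hget i _).symm ▸ hei) ((hget j _).symm ▸ hej)
    · exact hpw ⟨j.val, by omega⟩ ⟨i.val, by omega⟩ h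
        ((hget j _).symm ▸ hej) ((hget i _).symm ▸ hei)
  · intro e he
    have h1 : e ∈ ((L.map pathEdges).flatten) := by
      rw [← Multiset.mem_coe, hL2]
      exact he
    obtain ⟨l, hl, hel⟩ := List.mem_flatten.1 h1
    obtain ⟨i', hi'⟩ := List.mem_iff_get.1 hl
    have hmlen : (L.map pathEdges).length = L.length := List.length_map _
    refine ⟨⟨i'.val, by rw [← hmlen]; exact i'.isLt⟩, ?_⟩
    have : (L.map pathEdges).get i' = pathEdges (L.get ⟨i'.val, by rw [← hmlen]; exact i'.isLt⟩) := by
      show (L.map pathEdges)[i'.val] = _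
      rw [List.getElem_map]
      rfl
    rw [← this, hi']
    exact hel
  · intro a
    rw [Ants.card_filter_fin_eq_countP L (fun p => p.head? = some (s a))]
    exact hL3 (s a) ((hac.sources (s a)).2 ⟨a, rfl⟩)
  · intro b
    rw [Ants.card_filter_fin_eq_countP L (fun p => p.getLast? = some (t b))]
    exact hL4 (t b) ((hac.dests (t b)).2 ⟨b, rfl⟩)
end

section
/- Let G = (V, E) be a finite directed acyclic graph satisfying the ant-conservation condition with sources s_1, …, s_k and destinations t_1, …, t_k, let G' be the graph obtained by the tail construction, and let the weights w_e^i be defined from chosen paths R_i from s_i' to t_i'. If there exist k pairwise edge-disjoint directed paths Q_1, …, Q_k in G with Q_i from s_i to t_i, then there exist k pairwise edge-disjoint directed paths P_1, …, P_k in G' with P_i starting at s_i' and ending at t_i', whose total cost Σ_{i=1}^k Σ_{e ∈ P_i} w_e^i is at least k²·|V|. -/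
/-! ### The tail construction
`G'` lives on the vertex type `V ⊕ Fin k ⊕ (Fin k × Fin (k * |V|))`, where `Sum.inl v`
is an original vertex, `Sum.inr (Sum.inl i)` is the new source `sᵢ'`, and
`Sum.inr (Sum.inr (i, m))` is the `(m+1)`-st vertex `t_{i,m+1}` of the `i`-th tail
(so `tᵢ' = t_{i,k|V|}` is the tail vertex with index `m = k * |V| - 1`). -/

/-- Adjacency of the tail-construction graph `G'`: the edges of `G`, an edge `(sᵢ', sᵢ)`
for each `i`, an edge from `tᵢ` to the first vertex of the `i`-th tail, and the edges
along each tail path. -/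
def tailAdj {V : Type} [Fintype V] [DecidableEq V] {k : ℕ} (E : Finset (V × V))
    (s t : Fin k → V)
    (e : (V ⊕ Fin k ⊕ Fin k × Fin (k * Fintype.card V)) ×
         (V ⊕ Fin k ⊕ Fin k × Fin (k * Fintype.card V))) : Bool :=
  match e with
  | (Sum.inl u, Sum.inl v) => decide ((u, v) ∈ E)
  | (Sum.inr (Sum.inl i), Sum.inl v) => decide (v = s i)
  | (Sum.inl u, Sum.inr (Sum.inr (i, m))) => decide (u = t i) && decide ((m : ℕ) = 0)
  | (Sum.inr (Sum.inr (i, m)), Sum.inr (Sum.inr (j, m'))) =>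
      decide (i = j) && decide ((m' : ℕ) = (m : ℕ) + 1)
  | _ => false

/-- The edge set of the tail-construction graph `G'`. -/
def tailEdges {V : Type} [Fintype V] [DecidableEq V] {k : ℕ} (E : Finset (V × V))
    (s t : Fin k → V) :
    Finset ((V ⊕ Fin k ⊕ Fin k × Fin (k * Fintype.card V)) ×
            (V ⊕ Fin k ⊕ Fin k × Fin (k * Fintype.card V))) :=
  Finset.univ.filter (fun e => tailAdj E s t e = true)

/-- `z` is the last vertex `tᵢ' = t_{i, k|V|}` of the `i`-th tail. -/
def IsLastTail {V : Type} [Fintype V] {k : ℕ} (i : Fin k)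
    (z : V ⊕ Fin k ⊕ Fin k × Fin (k * Fintype.card V)) : Prop :=
  ∃ m : Fin (k * Fintype.card V), (m : ℕ) + 1 = k * Fintype.card V ∧
    z = Sum.inr (Sum.inr (i, m))

namespace S6

lemma pe_nil {V : Type} : pathEdges ([] : List V) = [] := rfl
lemma pe_single {V : Type} (x : V) : pathEdges [x] = [] := rfl
lemma pe_cons₂ {V : Type} (x y : V) (l : List V) :
    pathEdges (x :: y :: l) = (x, y) :: pathEdges (y :: l) := rfl

lemma mem_of_mem_pe {V : Type} {p : List V} {e : V × V} (h : e ∈ pathEdges p) :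
    e.1 ∈ p ∧ e.2 ∈ p := by
  induction p with
  | nil => simp [pe_nil] at h
  | cons x l ih =>
    cases l with
    | nil => simp [pe_single] at h
    | cons y l' =>
      rw [pe_cons₂] at h
      rcases List.mem_cons.1 h with h | h
      · subst h; simp
      · obtain ⟨h1, h2⟩ := ih h
        exact ⟨List.mem_cons_of_mem _ h1, List.mem_cons_of_mem _ h2⟩

lemma chain'_pe {V : Type} {R : V → V → Prop} {p : List V} (h : p.Chain' R) :
    ∀ e ∈ pathEdges p, R e.1 e.2 := by
  induction p with
  | nil => simp [pe_nil]
  | cons x l ih =>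
    cases l with
    | nil => simp [pe_single]
    | cons y l' =>
      rw [pe_cons₂]
      rw [List.Chain', List.isChain_cons_cons] at h
      intro e he
      rcases List.mem_cons.1 he with he | he
      · subst he; exact h.1
      · exact ih h.2 e he

lemma pe_concat {V : Type} {q : List V} {u : V} (hq : q.getLast? = some u) (z : V) :
    pathEdges (q ++ [z]) = pathEdges q ++ [(u, z)] := by
  induction q with
  | nil => simp at hq
  | cons x l ih =>
    cases l with
    | nil =>
      simp [List.getLast?_singleton] at hq
      subst hq; rfl
    | cons y l' =>
      rw [List.getLast?_cons_cons] at hq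
      have := ih hq
      simpa [pe_cons₂] using this

lemma pe_split {V : Type} : ∀ (l1 : List V) (x : V) (l2 : List V),
    pathEdges (l1 ++ x :: l2) = pathEdges (l1 ++ [x]) ++ pathEdges (x :: l2) := by
  intro l1
  induction l1 with
  | nil => intro x l2; simp [pe_single]
  | cons a l1' ih =>
    intro x l2
    cases l1' with
    | nil => simp [pe_cons₂, pe_single]
    | cons b l1'' =>
      show (a, b) :: pathEdges ((b :: l1'') ++ x :: l2) = _
      rw [ih x l2]
      rfl

lemma pe_map {V W : Type} (f : V → W) : ∀ (l : List V),
    pathEdges (l.map f) = (pathEdges l).map (fun e => (f e.1, f e.2)) := by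
  intro l
  induction l with
  | nil => rfl
  | cons x l ih =>
    cases l with
    | nil => rfl
    | cons y l' =>
      show (f x, f y) :: pathEdges ((y :: l').map f) = _
      rw [ih]
      rfl

lemma exists_pred {V : Type} [DecidableEq V] {E : Finset (V × V)} {p : List V} {z a : V}
    (hp : IsPath E p) (hl : p.getLast? = some z) (hh : p.head? = some a) (hne : a ≠ z) :
    ∃ q u, q.getLast? = some u ∧ q.head? = some a ∧ IsPath E q ∧
      (u, z) ∈ pathEdges p ∧ pathEdges q ⊆ pathEdges p ∧ (u, z) ∈ E := by
  obtain ⟨q, rfl⟩ := List.getLast?_eq_some_iff.1 hl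
  have hqne : q ≠ [] := by
    rintro rfl
    simp at hh
    exact hne hh.symm
  obtain ⟨u, hu⟩ : ∃ u, q.getLast? = some u := by
    cases hq : q.getLast? with
    | none => exact absurd (List.getLast?_eq_none_iff.1 hq) hqne
    | some u => exact ⟨u, rfl⟩
  have hpe : pathEdges (q ++ [z]) = pathEdges q ++ [(u, z)] := pe_concat hu z
  refine ⟨q, u, hu, ?_, ⟨hqne, hp.2.1.sublist (by simp), ?_⟩, ?_, ?_, ?_⟩
  · rw [List.head?_append_of_ne_nil _ hqne] at hh; exact hh
  · exact (List.isChain_append.1 hp.2.2).1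
  · rw [hpe]; simp
  · rw [hpe]; exact fun e he => List.mem_append_left _ he
  · exact chain'_pe hp.2.2 (u, z) (by rw [hpe]; simp)

lemma pe_range {V : Type} (g : ℕ → V) : ∀ (M : ℕ) (x : V),
    pathEdges (x :: (List.range M).map g) =
      (List.range M).map (fun n => (if n = 0 then x else g (n - 1), g n)) := by
  intro M
  induction M with
  | zero => intro x; rfl
  | succ M ih =>
    intro x
    rw [List.range_succ, List.map_append, List.map_append]
    have hlast : (x :: (List.range M).map g).getLast? =
        some (if M = 0 then x else g (M - 1)) := by
      cases M with
      | zero => rfl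
      | succ M' =>
        rw [List.range_succ, List.map_append]
        show ((x :: List.map g (List.range M')) ++ [g M']).getLast? = _
        rw [List.getLast?_concat]
        simp
    calc pathEdges (x :: ((List.range M).map g ++ ([M]).map g))
        = pathEdges ((x :: (List.range M).map g) ++ [g M]) := by simp
      _ = pathEdges (x :: (List.range M).map g) ++ [(if M = 0 then x else g (M - 1), g M)] :=
          pe_concat hlast _
      _ = _ := by rw [ih]; simp

variable {V : Type} [Fintype V] [DecidableEq V] {k : ℕ} (E : Finset (V × V)) (s t : Fin k → V)

lemma mem_tailEdges {e} : e ∈ tailEdges E s t ↔ tailAdj E s t e = true := by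
  simp [tailEdges]

/-- The `n`-th vertex of the `i`-th tail (index taken mod `k * |V|`). -/
def ftv (hN : 0 < k * Fintype.card V) (i : Fin k) (n : ℕ) :
    V ⊕ Fin k ⊕ Fin k × Fin (k * Fintype.card V) :=
  Sum.inr (Sum.inr (i, ⟨n % (k * Fintype.card V), Nat.mod_lt _ hN⟩))

/-- The `n`-th edge along the `i`-th tail (including the entry edge from `t i`). -/
def tedge (hN : 0 < k * Fintype.card V) (t : Fin k → V) (i : Fin k) (n : ℕ) :
    (V ⊕ Fin k ⊕ Fin k × Fin (k * Fintype.card V)) ×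
    (V ⊕ Fin k ⊕ Fin k × Fin (k * Fintype.card V)) :=
  ((if n = 0 then Sum.inl (t i) else ftv hN i (n - 1)), ftv hN i n)

lemma tail_pred {u : V ⊕ Fin k ⊕ Fin k × Fin (k * Fintype.card V)} {i : Fin k}
    {m : Fin (k * Fintype.card V)}
    (h : (u, Sum.inr (Sum.inr (i, m))) ∈ tailEdges E s t) :
    ((m : ℕ) = 0 ∧ u = Sum.inl (t i)) ∨
      ∃ m' : Fin (k * Fintype.card V), (m : ℕ) = (m' : ℕ) + 1 ∧
        u = Sum.inr (Sum.inr (i, m')) := by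
  rw [mem_tailEdges] at h
  rcases u with v | a | ⟨j, m'⟩
  · simp only [tailAdj, Bool.and_eq_true, decide_eq_true_eq] at h
    exact Or.inl ⟨h.2, by rw [h.1]⟩
  · simp [tailAdj] at h
  · simp only [tailAdj, Bool.and_eq_true, decide_eq_true_eq] at h
    exact Or.inr ⟨m', h.2, by rw [h.1]⟩

lemma tails_subset (hN : 0 < k * Fintype.card V) (i : Fin k) :
    ∀ n (m : Fin (k * Fintype.card V)), (m : ℕ) = n →
      ∀ p, IsPath (tailEdges E s t) p →
        p.head? = some (Sum.inr (Sum.inl i)) →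
        p.getLast? = some (Sum.inr (Sum.inr (i, m))) →
        ∀ j, j ≤ n → tedge hN t i j ∈ pathEdges p := by
  intro n
  induction n with
  | zero =>
    intro m hm p hp hh hl j hj
    interval_cases j
    obtain ⟨q, u, hqu, hqh, hq, hmem, hsub, hE⟩ :=
      exists_pred hp hl hh (by simp)
    rcases tail_pred E s t hE with ⟨_, rfl⟩ | ⟨m', hm', _⟩
    · have hm0 : (⟨0 % (k * Fintype.card V), Nat.mod_lt _ hN⟩ :
          Fin (k * Fintype.card V)) = m := Fin.ext (by simp [hm])
      simp only [tedge, ftv, hm0, reduceIte]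
      exact hmem
    · omega
  | succ n ih =>
    intro m hm p hp hh hl j hj
    obtain ⟨q, u, hqu, hqh, hq, hmem, hsub, hE⟩ :=
      exists_pred hp hl hh (by simp)
    rcases tail_pred E s t hE with ⟨h0, _⟩ | ⟨m', hm', rfl⟩
    · omega
    have hm'n : (m' : ℕ) = n := by omega
    rcases Nat.lt_or_ge j (n + 1) with hj' | hj'
    · exact hsub (ih m' hm'n q hq hqh hqu j (by omega))
    · have : j = n + 1 := by omega
      subst this
      have h1 : ftv hN i n = Sum.inr (Sum.inr (i, m')) := by
        unfold ftv
        congr 1; congr 1; congr 1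
        apply Fin.ext
        simp [hm'n, Nat.mod_eq_of_lt (hm'n ▸ m'.isLt)]
      have h2 : ftv hN i (n + 1) = Sum.inr (Sum.inr (i, m)) := by
        unfold ftv
        congr 1; congr 1; congr 1
        apply Fin.ext
        simp [hm, Nat.mod_eq_of_lt (hm ▸ m.isLt)]
      simpa [tedge, h1, h2] using hmem

end S6


/-- If `G` has `k` pairwise edge-disjoint paths `Qᵢ` from `sᵢ` to `tᵢ`,
then the tail-construction graph `G'`, with weights `wᵉᵢ` the indicators of chosen paths
`Rᵢ` from `sᵢ'` to `tᵢ'`, has `k` pairwise edge-disjoint paths `Pᵢ` from `sᵢ'` to `tᵢ'`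
of total cost at least `k² · |V|`. -/
theorem stmt6 {V : Type} [Fintype V] [DecidableEq V] (E : Finset (V × V)) (k : ℕ)
    (s t : Fin k → V) (hacyc : Acyclic E) (hac : AntConservation E k s t)
    (t' : Fin k → V ⊕ Fin k ⊕ Fin k × Fin (k * Fintype.card V))
    (ht' : ∀ i, IsLastTail i (t' i))
    (R : Fin k → List (V ⊕ Fin k ⊕ Fin k × Fin (k * Fintype.card V)))
    (hR : ∀ i, IsPathFrom (tailEdges E s t) (R i) (Sum.inr (Sum.inl i)) (t' i))
    (w : Fin k → (V ⊕ Fin k ⊕ Fin k × Fin (k * Fintype.card V)) ×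
                 (V ⊕ Fin k ⊕ Fin k × Fin (k * Fintype.card V)) → ℕ)
    (hw : ∀ i e, (e ∈ pathEdges (R i) → w i e = 1) ∧ (e ∉ pathEdges (R i) → w i e = 0))
    (Q : Fin k → List V) (hQ : ∀ i, IsPathFrom E (Q i) (s i) (t i))
    (hQdisj : EdgeDisjoint Q) :
    ∃ P : Fin k → List (V ⊕ Fin k ⊕ Fin k × Fin (k * Fintype.card V)),
      EdgeDisjoint P ∧
      (∀ i, IsPathFrom (tailEdges E s t) (P i) (Sum.inr (Sum.inl i)) (t' i)) ∧
      k ^ 2 * Fintype.card V ≤ ∑ i, listWeight (w i) (P i) := by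
  classical
  rcases Nat.eq_zero_or_pos k with hk0 | hk
  · subst hk0
    exact ⟨fun _ => [], fun i => i.elim0, fun i => i.elim0, by simp⟩
  have hN : 0 < k * Fintype.card V := by
    obtain ⟨m, hm1, _⟩ := ht' ⟨0, hk⟩
    omega
  obtain ⟨M, hM⟩ : ∃ M, k * Fintype.card V = M + 1 := ⟨k * Fintype.card V - 1, by omega⟩
  set T : Fin k → List (V ⊕ Fin k ⊕ Fin k × Fin (k * Fintype.card V)) :=
    fun i => (List.range (k * Fintype.card V)).map (S6.ftv hN i) with hTdef
  set P : Fin k → List (V ⊕ Fin k ⊕ Fin k × Fin (k * Fintype.card V)) :=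
    fun i => Sum.inr (Sum.inl i) :: ((Q i).map Sum.inl ++ T i) with hPdef
  -- basic facts about Q
  have hQcons : ∀ i, ∃ l, Q i = s i :: l := by
    intro i
    cases hq : Q i with
    | nil => exact absurd ((hQ i).2.1) (by rw [hq]; simp)
    | cons a l =>
      have := (hQ i).2.1
      rw [hq] at this
      simp at this
      exact ⟨l, by rw [this]⟩
  have hQlast : ∀ i, ∃ l, Q i = l ++ [t i] :=
    fun i => List.getLast?_eq_some_iff.1 (hQ i).2.2
  -- facts about tails
  have hThead : ∀ i, (T i).head? = some (S6.ftv hN i 0) := by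
    intro i
    rw [hTdef]
    simp only [hM, List.range_succ_eq_map, List.map_cons]
    rfl
  have hTlast : ∀ i, (T i).getLast? = some (S6.ftv hN i M) := by
    intro i
    rw [hTdef]
    simp only [hM, List.range_succ, List.map_append, List.map_cons, List.map_nil]
    rw [List.getLast?_concat]
  have ht'eq : ∀ i, t' i = S6.ftv hN i M := by
    intro i
    obtain ⟨m, hm1, hm2⟩ := ht' i
    rw [hm2]
    unfold S6.ftv
    congr 1
    congr 1
    congr 1
    apply Fin.ext
    simp only
    rw [Nat.mod_eq_of_lt (by omega : M < k * Fintype.card V)]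
    omega
  -- the key fact: every tail edge lies on R i
  have key : ∀ i n, n < k * Fintype.card V → S6.tedge hN t i n ∈ pathEdges (R i) := by
    intro i n hn
    obtain ⟨m, hm1, hm2⟩ := ht' i
    have hlast : (R i).getLast? = some (Sum.inr (Sum.inr (i, m))) := by
      rw [(hR i).2.2, hm2]
    exact S6.tails_subset E s t hN i (m : ℕ) m rfl (R i) (hR i).1 (hR i).2.1 hlast n (by omega)
  -- each P i is a path from sᵢ' to tᵢ'
  have hPpath : ∀ i, IsPathFrom (tailEdges E s t) (P i) (Sum.inr (Sum.inl i)) (t' i) := by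
    intro i
    obtain ⟨l0, hl0⟩ := hQcons i
    obtain ⟨l1, hl1⟩ := hQlast i
    refine ⟨⟨by simp [hPdef], ?_, ?_⟩, by simp [hPdef], ?_⟩
    · -- Nodup
      rw [hPdef]
      simp only
      rw [List.nodup_cons]
      constructor
      · simp [hTdef, S6.ftv]
      · rw [List.nodup_append]
        refine ⟨(hQ i).1.2.1.map Sum.inl_injective, ?_, ?_⟩
        · rw [hTdef]
          refine List.Nodup.map_on ?_ List.nodup_range
          intro a ha b hb hab
          have ha' := List.mem_range.1 ha
          have hb' := List.mem_range.1 hb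
          simp only [S6.ftv, Sum.inr.injEq, Prod.mk.injEq, Fin.mk.injEq,
            Nat.mod_eq_of_lt ha', Nat.mod_eq_of_lt hb'] at hab
          exact hab.2
        · intro x hx y hy
          obtain ⟨u, _, rfl⟩ := List.mem_map.1 hx
          rw [hTdef] at hy
          obtain ⟨n, _, hn⟩ := List.mem_map.1 hy
          simp [S6.ftv, ← hn]
    · -- Chain'
      rw [hPdef]
      simp only
      rw [List.Chain', List.isChain_cons]
      constructor
      · intro y hy
        rw [List.head?_append_of_ne_nil _ (by rw [hl0]; simp)] at hy
        rw [hl0] at hy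
        simp only [List.map_cons, List.head?_cons, Option.mem_some_iff] at hy
        subst hy
        rw [S6.mem_tailEdges]
        simp [tailAdj]
      · rw [List.isChain_append]
        refine ⟨?_, ?_, ?_⟩
        · rw [List.isChain_map]
          refine (hQ i).1.2.2.imp ?_
          intro a b hab
          rw [S6.mem_tailEdges]
          simpa [tailAdj] using hab
        · rw [hTdef]
          simp only
          rw [List.isChain_map,
            show List.range (k * Fintype.card V) = List.range (M + 1) from by rw [hM],
            List.isChain_range_succ]
          intro n hn
          rw [S6.mem_tailEdges]
          have e1 : n % (k * Fintype.card V) = n := Nat.mod_eq_of_lt (by omega)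
          have e2 : (n + 1) % (k * Fintype.card V) = n + 1 := Nat.mod_eq_of_lt (by omega)
          simp [tailAdj, S6.ftv, e1, e2]
        · intro x hx y hy
          rw [hl1, List.map_append, List.map_cons, List.map_nil, List.getLast?_concat] at hx
          rw [hThead i] at hy
          simp only [Option.mem_some_iff] at hx hy
          subst hx; subst hy
          rw [S6.mem_tailEdges]
          simp [tailAdj, S6.ftv]
    · -- getLast?
      rw [hPdef]
      simp only
      have hTne : T i ≠ [] := by
        rw [hTdef]; simp [hM]
      rw [show Sum.inr (Sum.inl i) :: ((Q i).map Sum.inl ++ T i)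
            = (Sum.inr (Sum.inl i) :: (Q i).map Sum.inl) ++ T i by simp]
      rw [List.getLast?_append, hTlast i, ht'eq i]
      simp
  -- weight lower bound for each i
  have hwlow : ∀ i, k * Fintype.card V ≤ listWeight (w i) (P i) := by
    intro i
    obtain ⟨l1, hl1⟩ := hQlast i
    have hsplit : P i = ((Sum.inr (Sum.inl i) :: l1.map Sum.inl) ++
        (Sum.inl (t i) :: T i)) := by
      rw [hPdef]
      simp only
      rw [hl1]
      simp
    rw [hsplit]
    unfold listWeight
    rw [S6.pe_split, List.map_append, List.sum_append]
    have hTsum : ((pathEdges (Sum.inl (t i) :: T i)).map (w i)).sum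
        = k * Fintype.card V := by
      rw [hTdef]
      simp only
      rw [S6.pe_range (S6.ftv hN i) (k * Fintype.card V) (Sum.inl (t i))]
      rw [List.map_map]
      have hcong : ∀ n ∈ List.range (k * Fintype.card V),
          (w i ∘ fun n => (if n = 0 then Sum.inl (t i) else S6.ftv hN i (n - 1),
            S6.ftv hN i n)) n = (fun _ => 1) n := by
        intro n hn
        exact (hw i _).1 (key i n (List.mem_range.1 hn))
      rw [List.map_congr_left hcong]
      simp
    omega
  -- edge characterization
  have hchar : ∀ (i : Fin k) e, e ∈ pathEdges (P i) →
      e = (Sum.inr (Sum.inl i), Sum.inl (s i)) ∨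
      (∃ u v, (u, v) ∈ pathEdges (Q i) ∧ e = (Sum.inl u, Sum.inl v)) ∨
      e = (Sum.inl (t i), S6.ftv hN i 0) ∨
      (∃ a b, e = (Sum.inr (Sum.inr (i, a)), Sum.inr (Sum.inr (i, b)))) := by
    intro i e he
    obtain ⟨l0, hl0⟩ := hQcons i
    obtain ⟨l1, hl1⟩ := hQlast i
    have h1 : P i = Sum.inr (Sum.inl i) :: Sum.inl (s i) :: (l0.map Sum.inl ++ T i) := by
      rw [hPdef]; simp only; rw [hl0]; simp
    rw [h1, S6.pe_cons₂] at he
    rcases List.mem_cons.1 he with he | he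
    · exact Or.inl he
    have h2 : Sum.inl (s i) :: (l0.map Sum.inl ++ T i) = ((Q i).map Sum.inl) ++ T i := by
      rw [hl0]; simp
    rw [h2] at he
    have h3 : T i = S6.ftv hN i 0 :: (List.range M).map (fun n => S6.ftv hN i (n + 1)) := by
      rw [hTdef]
      simp only [hM, List.range_succ_eq_map, List.map_cons, List.map_map]
      rfl
    rw [h3, S6.pe_split] at he
    rcases List.mem_append.1 he with he | he
    · have h4 : pathEdges ((Q i).map Sum.inl ++ [S6.ftv hN i 0]) =
          pathEdges ((Q i).map Sum.inl) ++ [(Sum.inl (t i), S6.ftv hN i 0)] := by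
        refine S6.pe_concat ?_ _
        rw [hl1, List.map_append, List.map_cons, List.map_nil, List.getLast?_concat]
      rw [h4] at he
      rcases List.mem_append.1 he with he | he
      · rw [S6.pe_map] at he
        obtain ⟨⟨u, v⟩, huv, rfl⟩ := List.mem_map.1 he
        exact Or.inr (Or.inl ⟨u, v, huv, rfl⟩)
      · refine Or.inr (Or.inr (Or.inl ?_))
        simpa using he
    · refine Or.inr (Or.inr (Or.inr ?_))
      obtain ⟨hf, hs⟩ := S6.mem_of_mem_pe he
      have hform : ∀ x ∈ S6.ftv hN i 0 ::
          (List.range M).map (fun n => S6.ftv hN i (n + 1)),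
          ∃ a, x = Sum.inr (Sum.inr (i, a)) := by
        intro x hx
        rcases List.mem_cons.1 hx with rfl | hx
        · exact ⟨_, rfl⟩
        · obtain ⟨n, _, rfl⟩ := List.mem_map.1 hx
          exact ⟨_, rfl⟩
      obtain ⟨a, ha⟩ := hform _ hf
      obtain ⟨b, hb⟩ := hform _ hs
      exact ⟨a, b, by rw [← ha, ← hb]⟩
  refine ⟨P, ?_, hPpath, ?_⟩
  · -- edge disjointness
    intro i j hij e hei hej
    rcases hchar i e hei with h1 | ⟨u, v, huv, h1⟩ | h1 | ⟨a, b, h1⟩ <;>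
      rcases hchar j e hej with h2 | ⟨u', v', h'uv, h2⟩ | h2 | ⟨a', b', h2⟩ <;>
      rw [h1] at h2 <;>
      simp only [S6.ftv, Prod.mk.injEq, Sum.inl.injEq, Sum.inr.injEq,
        Fin.mk.injEq, reduceCtorEq, false_and, and_false, true_and, and_true] at h2 <;>
      first
        | exact hij h2.1
        | exact hij h2.2
        | exact hij h2.1.1
        | exact hij h2.2.1
        | (obtain ⟨rfl, rfl⟩ := h2
           exact hQdisj i j hij (u, v) huv h'uv)
  · -- total weight
    calc k ^ 2 * Fintype.card V = ∑ _i : Fin k, k * Fintype.card V := by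
          rw [Finset.sum_const, Finset.card_univ, Fintype.card_fin]
          ring
      _ ≤ ∑ i, listWeight (w i) (P i) := Finset.sum_le_sum fun i _ => hwlow i
end

section
/- Let G = (V, E) be a finite directed acyclic graph satisfying the ant-conservation condition, let G' be the graph obtained by the tail construction, and let the weights w_e^i be defined from chosen paths R_i from s_i' to t_i'. If P is a directed path in G' from s_i' to t_j' with j ≠ i, then Σ_{e ∈ P} w_e^i ≤ |V|. -/
theorem pathEdges_cons2 {V : Type} (a b : V) (l : List V) :
    pathEdges (a :: b :: l) = (a, b) :: pathEdges (b :: l) := rfl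

theorem mem_of_chain' {V : Type} (Ep : V → V → Prop) :
    ∀ (l : List V), l.Chain' Ep → ∀ e ∈ pathEdges l, Ep e.1 e.2 := by
  intro l
  induction l with
  | nil => intro _ e he; simp [pathEdges] at he
  | cons a l ih =>
    cases l with
    | nil => intro _ e he; simp [pathEdges] at he
    | cons b l =>
      intro h e he
      simp only [List.Chain', List.isChain_cons_cons] at h
      rw [pathEdges_cons2, List.mem_cons] at he
      rcases he with rfl | he
      · exact h.1
      · exact ih h.2 e he

theorem map_snd_pathEdges {V : Type} (l : List V) :
    (pathEdges l).map Prod.snd = l.tail :=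
  List.map_snd_zip (by cases l <;> simp)

theorem sum_map_le_length_filter {α : Type} (g : α → ℕ) (q : α → Bool) :
    ∀ (l : List α), (∀ e ∈ l, g e ≤ if q e then 1 else 0) →
      (l.map g).sum ≤ (l.filter q).length := by
  intro l
  induction l with
  | nil => simp
  | cons a l ih =>
    intro h
    have ha := h a (by simp)
    have ih' := ih (fun e he => h e (by simp [he]))
    by_cases hq : q a
    · simp only [hq, if_pos] at ha
      simp [List.filter_cons, hq]
      omega
    · simp only [hq] at ha
      simp at ha
      simp [List.filter_cons, hq, ha]
      omega

section tails
variable {V : Type} [Fintype V] [DecidableEq V] {k : ℕ} (E : Finset (V × V)) (s t : Fin k → V)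

/-- From a tail vertex, every out-edge stays in the same tail. -/
theorem tail_step {j : Fin k} {m : Fin (k * Fintype.card V)}
    {z : V ⊕ Fin k ⊕ Fin k × Fin (k * Fintype.card V)}
    (h : (Sum.inr (Sum.inr (j, m)), z) ∈ tailEdges E s t) :
    ∃ m', z = Sum.inr (Sum.inr (j, m')) := by
  simp only [tailEdges, Finset.mem_filter, Finset.mem_univ, true_and] at h
  match z with
  | Sum.inl v => simp [tailAdj] at h
  | Sum.inr (Sum.inl i') => simp [tailAdj] at h
  | Sum.inr (Sum.inr (j', m')) =>
    simp only [tailAdj, Bool.and_eq_true, decide_eq_true_eq] at h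
    exact ⟨m', by rw [h.1]⟩

/-- Chains starting in tail `j` stay in tail `j`. -/
theorem tail_chain {j : Fin k} :
    ∀ (l : List (V ⊕ Fin k ⊕ Fin k × Fin (k * Fintype.card V))),
      l.Chain' (fun u v => (u, v) ∈ tailEdges E s t) →
      (∀ z ∈ l.head?, ∃ m, z = Sum.inr (Sum.inr (j, m))) →
      ∀ z ∈ l, ∃ m, z = Sum.inr (Sum.inr (j, m)) := by
  intro l
  induction l with
  | nil => simp
  | cons a l ih =>
    intro hc hh z hz
    obtain ⟨m, rfl⟩ := hh a (by simp)
    rw [List.mem_cons] at hz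
    rcases hz with rfl | hz
    · exact ⟨m, rfl⟩
    · simp only [List.Chain', List.isChain_cons] at hc
      refine ih hc.2 ?_ z hz
      intro z' hz'
      exact tail_step E s t (hc.1 z' hz')

/-- If a chain contains a tail-`j'` vertex and ends at a tail-`j` vertex, then `j' = j`. -/
theorem tail_absorb {j j' : Fin k} {m : Fin (k * Fintype.card V)}
    {m'' : Fin (k * Fintype.card V)}
    (l : List (V ⊕ Fin k ⊕ Fin k × Fin (k * Fintype.card V)))
    (hc : l.Chain' (fun u v => (u, v) ∈ tailEdges E s t))
    (hlast : l.getLast? = some (Sum.inr (Sum.inr (j, m''))))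
    (hmem : (Sum.inr (Sum.inr (j', m)) : V ⊕ Fin k ⊕ Fin k × Fin (k * Fintype.card V)) ∈ l) :
    j' = j := by
  obtain ⟨l₁, l₂, rfl⟩ := List.append_of_mem hmem
  have hsuf : (Sum.inr (Sum.inr (j', m)) :: l₂).Chain'
      (fun u v => (u, v) ∈ tailEdges E s t) := hc.suffix ⟨l₁, rfl⟩
  have hall := tail_chain (j := j') E s t _ hsuf
    (by intro z hz; simp at hz; exact ⟨m, hz.symm⟩)
  rw [List.getLast?_append_of_ne_nil _ (by simp)] at hlast
  have hlm := List.mem_of_mem_getLast? hlast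
  obtain ⟨m₀, heq⟩ := hall _ hlm
  simp at heq
  exact heq.1.symm
end tails

/-- In the tail-construction graph `G'` with indicator weights coming
from chosen paths `Rᵢ` from `sᵢ'` to `tᵢ'`, any directed path from `sᵢ'` to `tⱼ'` with
`j ≠ i` has `wⁱ`-weight at most `|V|`. -/
theorem stmt7 {V : Type} [Fintype V] [DecidableEq V] (E : Finset (V × V)) (k : ℕ)
    (s t : Fin k → V) (hacyc : Acyclic E) (hac : AntConservation E k s t)
    (t' : Fin k → V ⊕ Fin k ⊕ Fin k × Fin (k * Fintype.card V))
    (ht' : ∀ i, IsLastTail i (t' i))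
    (R : Fin k → List (V ⊕ Fin k ⊕ Fin k × Fin (k * Fintype.card V)))
    (hR : ∀ i, IsPathFrom (tailEdges E s t) (R i) (Sum.inr (Sum.inl i)) (t' i))
    (w : Fin k → (V ⊕ Fin k ⊕ Fin k × Fin (k * Fintype.card V)) ×
                 (V ⊕ Fin k ⊕ Fin k × Fin (k * Fintype.card V)) → ℕ)
    (hw : ∀ i e, (e ∈ pathEdges (R i) → w i e = 1) ∧ (e ∉ pathEdges (R i) → w i e = 0))
    (i j : Fin k) (hij : j ≠ i)
    (P : List (V ⊕ Fin k ⊕ Fin k × Fin (k * Fintype.card V)))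
    (hP : IsPathFrom (tailEdges E s t) P (Sum.inr (Sum.inl i)) (t' j)) :
    listWeight (w i) P ≤ Fintype.card V := by
  obtain ⟨⟨hPne, hPnd, hPch⟩, hPhead, hPlast⟩ := hP
  obtain ⟨⟨hRne, hRnd, hRch⟩, hRhead, hRlast⟩ := hR i
  obtain ⟨mj, hmj, htj⟩ := ht' j
  obtain ⟨mi, hmi, hti⟩ := ht' i
  set q : (V ⊕ Fin k ⊕ Fin k × Fin (k * Fintype.card V)) ×
      (V ⊕ Fin k ⊕ Fin k × Fin (k * Fintype.card V)) → Bool :=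
    fun e => decide (∃ x ∈ pathEdges (R i), x = e) with hqdef
  have h1 : listWeight (w i) P ≤ ((pathEdges P).filter q).length := by
    apply sum_map_le_length_filter
    intro e _
    rcases Classical.em (e ∈ pathEdges (R i)) with hm | hm
    · simp [hqdef, hm, (hw i e).1 hm]
    · simp [hqdef, hm, (hw i e).2 hm]
  have hsnd : ∀ e ∈ (pathEdges P).filter q, ∃ v : V, e.2 = Sum.inl v := by
    intro e he
    rw [List.mem_filter] at he
    obtain ⟨heP, heq⟩ := he
    have heR : e ∈ pathEdges (R i) := by simpa [hqdef] using heq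
    have hePE : (e.1, e.2) ∈ tailEdges E s t := mem_of_chain' _ P hPch e heP
    obtain ⟨x, y⟩ := e
    match y with
    | Sum.inl v => exact ⟨v, rfl⟩
    | Sum.inr (Sum.inl i') =>
      exfalso
      simp only [tailEdges, Finset.mem_filter, Finset.mem_univ, true_and] at hePE
      match x with
      | Sum.inl u => simp [tailAdj] at hePE
      | Sum.inr (Sum.inl i'') => simp [tailAdj] at hePE
      | Sum.inr (Sum.inr p) => simp [tailAdj] at hePE
    | Sum.inr (Sum.inr (j', m)) =>
      exfalso
      have hyP : (Sum.inr (Sum.inr (j', m)) :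
          V ⊕ Fin k ⊕ Fin k × Fin (k * Fintype.card V)) ∈ P := by
        have : (Sum.inr (Sum.inr (j', m)) :
            V ⊕ Fin k ⊕ Fin k × Fin (k * Fintype.card V)) ∈ P.tail := by
          rw [← map_snd_pathEdges]
          exact List.mem_map.2 ⟨_, heP, rfl⟩
        exact List.mem_of_mem_tail this
      have hyR : (Sum.inr (Sum.inr (j', m)) :
          V ⊕ Fin k ⊕ Fin k × Fin (k * Fintype.card V)) ∈ R i := by
        have : (Sum.inr (Sum.inr (j', m)) :
            V ⊕ Fin k ⊕ Fin k × Fin (k * Fintype.card V)) ∈ (R i).tail := by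
          rw [← map_snd_pathEdges]
          exact List.mem_map.2 ⟨_, heR, rfl⟩
        exact List.mem_of_mem_tail this
      have hj : j' = j := by
        refine tail_absorb (m'' := mj) E s t P hPch ?_ hyP
        rw [hPlast, htj]
      have hi : j' = i := by
        refine tail_absorb (m'' := mi) E s t (R i) hRch ?_ hyR
        rw [hRlast, hti]
      exact hij (hj ▸ hi)
  have hnd : (((pathEdges P).filter q).map Prod.snd).Nodup := by
    have hsub : (((pathEdges P).filter q).map Prod.snd).Sublist
        ((pathEdges P).map Prod.snd) := (List.filter_sublist (p := q) (l := pathEdges P)).map Prod.snd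
    rw [map_snd_pathEdges] at hsub
    exact hsub.nodup hPnd.tail
  have hcard : ((pathEdges P).filter q).length ≤ Fintype.card V := by
    have hlen : (((pathEdges P).filter q).map Prod.snd).length
        = ((pathEdges P).filter q).length := List.length_map _
    rw [← hlen, ← List.toFinset_card_of_nodup hnd]
    have hsubF : (((pathEdges P).filter q).map Prod.snd).toFinset ⊆
        Finset.univ.image (Sum.inl : V → V ⊕ Fin k ⊕ Fin k × Fin (k * Fintype.card V)) := by
      intro z hz
      rw [List.mem_toFinset] at hz
      obtain ⟨e, he, rfl⟩ := List.mem_map.1 hz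
      obtain ⟨v, hv⟩ := hsnd e he
      rw [hv]
      exact Finset.mem_image.2 ⟨v, Finset.mem_univ _, rfl⟩
    calc (((pathEdges P).filter q).map Prod.snd).toFinset.card
        ≤ (Finset.univ.image (Sum.inl : V → V ⊕ Fin k ⊕ Fin k ×
            Fin (k * Fintype.card V))).card := Finset.card_le_card hsubF
      _ = Fintype.card V := by
          rw [Finset.card_image_of_injective _ Sum.inl_injective, Finset.card_univ]
  exact h1.trans hcard
end

section
/- Let G = (V, E) be a finite directed acyclic graph satisfying the ant-conservation condition with sources s_1, …, s_k and destinations t_1, …, t_k, let G' be the graph obtained by the tail construction, and let the weights w_e^i be defined from chosen paths R_i from s_i' to t_i'. If P_1, …, P_k are pairwise edge-disjoint directed paths in G' such that each P_i starts at s_i' and ends at some vertex of outdegree 0, and Σ_{i=1}^k Σ_{e ∈ P_i} w_e^i ≥ k²·|V|, then for every i the path P_i ends at t_i' and passes through s_i and t_i, and the portions of the paths P_i lying inside G form k pairwise edge-disjoint directed paths in G, the i-th going from s_i to t_i. -/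
/-- The portion of a list of edges of `G'` lying inside `G`: keep exactly the edges both
of whose endpoints are original vertices. -/
def innerEdges {V A : Type} (l : List ((V ⊕ A) × (V ⊕ A))) : List (V × V) :=
  l.filterMap (fun e =>
    match e with
    | (Sum.inl u, Sum.inl v) => some (u, v)
    | _ => none)

set_option linter.unusedSectionVars false
set_option maxHeartbeats 1000000

namespace Stmt8Aux

variable {V W : Type}

@[simp] lemma pathEdges_nil : pathEdges ([] : List V) = [] := rfl
@[simp] lemma pathEdges_singleton (a : V) : pathEdges [a] = [] := rfl
@[simp] lemma pathEdges_cons_cons (a b : V) (l : List V) :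
    pathEdges (a :: b :: l) = (a, b) :: pathEdges (b :: l) := rfl

lemma pathEdges_append (l₁ : List V) (b : V) (l₂ : List V) :
    pathEdges (l₁ ++ b :: l₂) = pathEdges (l₁ ++ [b]) ++ pathEdges (b :: l₂) := by
  induction l₁ with
  | nil => simp
  | cons x l ih =>
    cases l with
    | nil => simp
    | cons y l' => simpa using ih

lemma pathEdges_map (f : V → W) (l : List V) :
    pathEdges (l.map f) = (pathEdges l).map (Prod.map f f) := by
  induction l with
  | nil => simp
  | cons x l ih =>
    cases l with
    | nil => simp
    | cons y l' => simpa using ih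

lemma length_pathEdges (l : List V) : (pathEdges l).length = l.length - 1 := by
  simp [pathEdges]

lemma mem_pathEdges_cons {e : V × V} {l : List V} (x : V) (h : e ∈ pathEdges l) :
    e ∈ pathEdges (x :: l) := by
  cases l with
  | nil => simp at h
  | cons y l' => simp [h]

lemma mem_of_mem_pathEdges {a b : V} {l : List V} (h : (a, b) ∈ pathEdges l) :
    a ∈ l ∧ b ∈ l := by
  induction l with
  | nil => simp at h
  | cons x l ih =>
    cases l with
    | nil => simp at h
    | cons y l' =>
      rw [pathEdges_cons_cons, List.mem_cons] at h
      rcases h with h | h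
      · rw [Prod.mk.injEq] at h
        obtain ⟨rfl, rfl⟩ := h
        simp
      · have := ih h
        simp only [List.mem_cons] at this ⊢
        exact ⟨Or.inr this.1, Or.inr this.2⟩

lemma pathEdges_nodup {l : List V} (h : l.Nodup) : (pathEdges l).Nodup := by
  induction l with
  | nil => simp
  | cons x l ih =>
    cases l with
    | nil => simp
    | cons y l' =>
      rw [pathEdges_cons_cons]
      refine List.nodup_cons.mpr ⟨?_, ih (List.nodup_cons.mp h).2⟩
      intro hmem
      exact (List.nodup_cons.mp h).1 (mem_of_mem_pathEdges hmem).1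

lemma mem_pathEdges_concat {l : List V} {a : V} (b : V) (h : l.getLast? = some a) :
    (a, b) ∈ pathEdges (l ++ [b]) := by
  induction l with
  | nil => simp at h
  | cons x l ih =>
    cases l with
    | nil =>
      simp only [List.getLast?_singleton, Option.some.injEq] at h
      subst h; simp
    | cons y l' =>
      rw [List.getLast?_cons_cons] at h
      have := ih h
      exact mem_pathEdges_cons x this

lemma mem_pathEdges_boundary {l₁ l₂ : List V} {a b : V}
    (h₁ : l₁.getLast? = some a) (h₂ : l₂.head? = some b) :
    (a, b) ∈ pathEdges (l₁ ++ l₂) := by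
  obtain ⟨l₂', rfl⟩ : ∃ l₂', l₂ = b :: l₂' := by
    cases l₂ with
    | nil => simp at h₂
    | cons c l =>
      simp only [List.head?_cons, Option.some.injEq] at h₂
      exact ⟨l, by rw [h₂]⟩
  rw [pathEdges_append]
  exact List.mem_append_left _ (mem_pathEdges_concat b h₁)

lemma pathEdges_concat_eq {l : List V} {a : V} (b : V) (h : l.getLast? = some a) :
    pathEdges (l ++ [b]) = pathEdges l ++ [(a, b)] := by
  induction l with
  | nil => simp at h
  | cons x l ih =>
    cases l with
    | nil =>
      simp only [List.getLast?_singleton, Option.some.injEq] at h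
      subst h; simp
    | cons y l' =>
      rw [List.getLast?_cons_cons] at h
      have := ih h
      simp only [List.cons_append, pathEdges_cons_cons]
      exact congrArg _ this

lemma sum_map_le_length_filter (l : List V) (wt : V → ℕ) (pr : V → Bool)
    (h : ∀ e ∈ l, wt e ≤ if pr e then 1 else 0) :
    (l.map wt).sum ≤ (l.filter pr).length := by
  induction l with
  | nil => simp
  | cons a l ih =>
    have ha := h a (List.mem_cons_self)
    have ih' := ih (fun e he => h e (List.mem_cons_of_mem a he))
    by_cases hp : pr a = true
    · rw [List.filter_cons_of_pos hp]
      simp only [hp, if_true] at ha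
      simp only [List.map_cons, List.sum_cons, List.length_cons]
      omega
    · rw [List.filter_cons_of_neg hp]
      rw [Bool.not_eq_true] at hp
      rw [hp] at ha
      simp only [Bool.false_eq_true, if_false, Nat.le_zero] at ha
      simp only [List.map_cons, List.sum_cons, ha]
      omega


section Graph

variable {V : Type} [Fintype V] [DecidableEq V] {k : ℕ} (E : Finset (V × V)) (s t : Fin k → V)

/-- The tail path of index `j`, starting at position `m`. -/
def TLfrom (m : ℕ) (j : Fin k) : List (V ⊕ Fin k ⊕ Fin k × Fin (k * Fintype.card V)) :=
  ((List.finRange (k * Fintype.card V)).drop m).map (fun m' => Sum.inr (Sum.inr (j, m')))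

lemma mem_tailEdges {e} : e ∈ tailEdges E s t ↔ tailAdj E s t e = true := by
  simp [tailEdges]

lemma outdeg_eq_zero_iff {α : Type} [DecidableEq α] (E' : Finset (α × α)) (z : α) :
    outdeg E' z = 0 ↔ ∀ x, (z, x) ∉ E' := by
  rw [outdeg, Finset.card_eq_zero, Finset.filter_eq_empty_iff]
  constructor
  · intro h x hx
    exact (h hx) rfl
  · intro h e he heq
    have heq' : e = (z, e.2) := by rw [← heq]
    exact h e.2 (heq' ▸ he)

lemma outdeg_ne_zero_of_mem {α : Type} [DecidableEq α] {E' : Finset (α × α)} {z x : α}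
    (h : (z, x) ∈ E') : outdeg E' z ≠ 0 :=
  fun h0 => ((outdeg_eq_zero_iff E' z).mp h0) x h

lemma edge_src (i : Fin k) :
    (Sum.inr (Sum.inl i), Sum.inl (s i)) ∈ tailEdges E s t := by
  simp [mem_tailEdges, tailAdj]

lemma outdeg_tail_last (j : Fin k) (m : Fin (k * Fintype.card V))
    (hm : (m : ℕ) + 1 = k * Fintype.card V) :
    outdeg (tailEdges E s t) (Sum.inr (Sum.inr (j, m))) = 0 := by
  rw [outdeg_eq_zero_iff]
  intro x hx
  rw [mem_tailEdges] at hx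
  rcases x with v | i | ⟨j', m'⟩ <;> simp [tailAdj] at hx
  · exact absurd hx.2 (by have := m'.isLt; omega)

lemma outdeg_inl_ne_zero (hd : ∀ v, outdeg E v = 0 ↔ ∃ i, t i = v)
    (hkn : 0 < k * Fintype.card V) (v : V) :
    outdeg (tailEdges E s t) (Sum.inl v) ≠ 0 := by
  by_cases h : outdeg E v = 0
  · obtain ⟨j, hj⟩ := (hd v).mp h
    refine outdeg_ne_zero_of_mem (x := Sum.inr (Sum.inr (j, ⟨0, hkn⟩))) ?_
    simp [mem_tailEdges, tailAdj, hj]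
  · have hpos : 0 < (E.filter (fun e => e.1 = v)).card := Nat.pos_of_ne_zero h
    obtain ⟨e, he⟩ := Finset.card_pos.mp hpos
    rw [Finset.mem_filter] at he
    refine outdeg_ne_zero_of_mem (x := Sum.inl e.2) ?_
    rw [mem_tailEdges]
    have : (v, e.2) ∈ E := by
      have : e = (v, e.2) := by rw [← he.2]
      exact this ▸ he.1
    simp [tailAdj, this]

lemma TLfrom_head (hkn : 0 < k * Fintype.card V) (j : Fin k) :
    (TLfrom (V := V) 0 j).head? = some (Sum.inr (Sum.inr (j, ⟨0, hkn⟩))) := by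
  rw [TLfrom, List.drop_zero, List.head?_map, List.head?_eq_getElem?]
  rw [List.getElem?_eq_getElem (by simpa using hkn)]
  simp

lemma TLfrom_getLast (hkn : 0 < k * Fintype.card V) (j : Fin k) :
    (TLfrom (V := V) 0 j).getLast? =
      some (Sum.inr (Sum.inr (j, ⟨k * Fintype.card V - 1, by omega⟩))) := by
  rw [TLfrom, List.drop_zero, List.getLast?_map, List.getLast?_eq_getElem?]
  rw [List.getElem?_eq_getElem (by rw [List.length_finRange]; omega)]
  simp

lemma TLfrom_length (m : ℕ) (j : Fin k) :
    (TLfrom (V := V) m j).length = k * Fintype.card V - m := by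
  simp [TLfrom]

lemma TLfrom_ne_nil (hkn : 0 < k * Fintype.card V) (j : Fin k) :
    (TLfrom (V := V) 0 j) ≠ [] := by
  intro h
  have := congrArg List.length h
  rw [TLfrom_length] at this
  simp only [List.length_nil] at this
  omega

lemma mem_TLfrom {m : ℕ} {j : Fin k} {x} (hx : x ∈ TLfrom (V := V) m j) :
    ∃ m', x = Sum.inr (Sum.inr (j, m')) := by
  rw [TLfrom, List.mem_map] at hx
  obtain ⟨m', _, rfl⟩ := hx
  exact ⟨m', rfl⟩

lemma TLfrom_cons (m : ℕ) (hm : m < k * Fintype.card V) (j : Fin k) :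
    TLfrom (V := V) m j = Sum.inr (Sum.inr (j, ⟨m, hm⟩)) :: TLfrom (m + 1) j := by
  simp only [TLfrom]
  rw [List.drop_eq_getElem_cons (by simpa using hm)]
  simp

lemma TLfrom_eq_nil (m : ℕ) (hm : k * Fintype.card V ≤ m) (j : Fin k) :
    TLfrom (V := V) m j = [] := by
  apply List.eq_nil_of_length_eq_zero
  rw [TLfrom_length]
  omega

/-- Once a path enters a tail, it must run to the end of the tail. -/
lemma tail_force (j : Fin k) (p : List (V ⊕ Fin k ⊕ Fin k × Fin (k * Fintype.card V))) :
    ∀ m : Fin (k * Fintype.card V),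
    p.Chain' (fun u v => (u, v) ∈ tailEdges E s t) →
    p.head? = some (Sum.inr (Sum.inr (j, m))) →
    (∀ z, p.getLast? = some z → outdeg (tailEdges E s t) z = 0) →
    p = TLfrom (m : ℕ) j := by
  induction p with
  | nil => intro m _ hh _; simp at hh
  | cons x rest ih =>
    intro m hc hh hz
    simp only [List.head?_cons, Option.some.injEq] at hh
    subst hh
    have hlen : (m : ℕ) < (List.finRange (k * Fintype.card V)).length := by
      simpa using m.isLt
    cases rest with
    | nil =>
      have h0 := hz (Sum.inr (Sum.inr (j, m))) (by simp)
      have hm : (m : ℕ) + 1 = k * Fintype.card V := by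
        by_contra hne
        have hlt : (m : ℕ) + 1 < k * Fintype.card V := by
          have := m.isLt; omega
        refine outdeg_ne_zero_of_mem
          (x := Sum.inr (Sum.inr (j, ⟨(m : ℕ) + 1, hlt⟩))) ?_ h0
        simp [mem_tailEdges, tailAdj]
      rw [TLfrom_cons (m : ℕ) m.isLt, TLfrom_eq_nil _ (by omega)]
    | cons y rest' =>
      have hadj : (Sum.inr (Sum.inr (j, m)), y) ∈ tailEdges E s t :=
        (List.isChain_cons_cons.mp hc).1
      rw [mem_tailEdges] at hadj
      rcases y with v | i | ⟨j', m'⟩ <;> simp [tailAdj] at hadj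
      obtain ⟨rfl, hm'⟩ := hadj
      have hrest := ih m' (List.isChain_cons_cons.mp hc).2 (by simp)
        (fun z hzz => hz z (by rwa [List.getLast?_cons_cons]))
      rw [hrest, hm']
      rw [TLfrom_cons (m : ℕ) m.isLt]

/-- A path starting inside `G` must exit through some `t j` and then run along tail `j`. -/
lemma inl_force (hd : ∀ v, outdeg E v = 0 ↔ ∃ i, t i = v)
    (hkn : 0 < k * Fintype.card V)
    (p : List (V ⊕ Fin k ⊕ Fin k × Fin (k * Fintype.card V))) :
    ∀ v : V,
    p.Chain' (fun u v => (u, v) ∈ tailEdges E s t) →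
    p.head? = some (Sum.inl v) →
    (∀ z, p.getLast? = some z → outdeg (tailEdges E s t) z = 0) →
    ∃ (q : List V) (j : Fin k), q.head? = some v ∧ q.getLast? = some (t j) ∧
      q.Chain' (fun u w => (u, w) ∈ E) ∧ p = q.map Sum.inl ++ TLfrom 0 j := by
  induction p with
  | nil => intro v _ hh _; simp at hh
  | cons x rest ih =>
    intro v hc hh hz
    simp only [List.head?_cons, Option.some.injEq] at hh
    subst hh
    cases rest with
    | nil =>
      exact absurd (hz _ (by simp)) (outdeg_inl_ne_zero E s t hd hkn v)
    | cons y rest' =>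
      have hadj : (Sum.inl v, y) ∈ tailEdges E s t := (List.isChain_cons_cons.mp hc).1
      rw [mem_tailEdges] at hadj
      rcases y with v' | i' | ⟨j', m'⟩ <;> simp [tailAdj] at hadj
      · -- next vertex still inside G
        obtain ⟨q', j, hqh, hql, hqc, hre⟩ := ih v' (List.isChain_cons_cons.mp hc).2 (by simp)
          (fun z hzz => hz z (by rwa [List.getLast?_cons_cons]))
        obtain ⟨a, q'', rfl⟩ : ∃ a q'', q' = a :: q'' := by
          cases q' with
          | nil => simp at hqh
          | cons a q'' => exact ⟨a, q'', rfl⟩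
        simp only [List.head?_cons, Option.some.injEq] at hqh
        subst hqh
        refine ⟨v :: a :: q'', j, by simp, by rwa [List.getLast?_cons_cons], ?_, ?_⟩
        · exact List.isChain_cons_cons.mpr ⟨hadj, hqc⟩
        · simp only [List.map_cons, List.cons_append]
          rw [hre]
          simp
      · -- next vertex is on a tail
        obtain ⟨hv, hm'⟩ := hadj
        have hrest := tail_force E s t j' (Sum.inr (Sum.inr (j', m')) :: rest') m'
          (List.isChain_cons_cons.mp hc).2 (by simp)
          (fun z hzz => hz z (by rwa [List.getLast?_cons_cons]))
        refine ⟨[v], j', by simp, by simp [hv], List.isChain_singleton _, ?_⟩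
        simp only [List.map_cons, List.map_nil, List.cons_append, List.nil_append]
        rw [hrest, hm']

/-- Full shape of a maximal path starting at a source `sᵢ'`. -/
lemma shape (hd : ∀ v, outdeg E v = 0 ↔ ∃ i, t i = v) (hkn : 0 < k * Fintype.card V)
    (p : List (V ⊕ Fin k ⊕ Fin k × Fin (k * Fintype.card V))) (i : Fin k)
    (hc : p.Chain' (fun u v => (u, v) ∈ tailEdges E s t))
    (hh : p.head? = some (Sum.inr (Sum.inl i)))
    (hz : ∀ z, p.getLast? = some z → outdeg (tailEdges E s t) z = 0) :
    ∃ (q : List V) (j : Fin k), q.head? = some (s i) ∧ q.getLast? = some (t j) ∧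
      q.Chain' (fun u w => (u, w) ∈ E) ∧
      p = Sum.inr (Sum.inl i) :: (q.map Sum.inl ++ TLfrom 0 j) := by
  cases p with
  | nil => simp at hh
  | cons x rest =>
    simp only [List.head?_cons, Option.some.injEq] at hh
    subst hh
    cases rest with
    | nil =>
      exact absurd (hz _ (by simp)) (outdeg_ne_zero_of_mem (edge_src E s t i))
    | cons y rest' =>
      have hadj : (Sum.inr (Sum.inl i), y) ∈ tailEdges E s t := (List.isChain_cons_cons.mp hc).1
      rw [mem_tailEdges] at hadj
      rcases y with v' | i' | ⟨j', m'⟩ <;> simp [tailAdj] at hadj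
      subst hadj
      obtain ⟨q, j, h1, h2, h3, h4⟩ := inl_force E s t hd hkn (Sum.inl (s i) :: rest') (s i)
        (List.isChain_cons_cons.mp hc).2 (by simp)
        (fun z hzz => hz z (by rwa [List.getLast?_cons_cons]))
      exact ⟨q, j, h1, h2, h3, by rw [← h4]⟩

end Graph

section Inner
variable {V A : Type}

lemma mem_innerEdges {l : List ((V ⊕ A) × (V ⊕ A))} {u v : V} :
    (u, v) ∈ innerEdges l ↔ (Sum.inl u, Sum.inl v) ∈ l := by
  rw [innerEdges, List.mem_filterMap]
  constructor
  · rintro ⟨⟨x, y⟩, hmem, hev⟩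
    rcases x with x | x <;> rcases y with y | y <;> simp at hev
    obtain ⟨rfl, rfl⟩ := hev
    exact hmem
  · intro h
    exact ⟨(Sum.inl u, Sum.inl v), h, rfl⟩

lemma innerEdges_eq_nil {l : List ((V ⊕ A) × (V ⊕ A))}
    (h : ∀ e ∈ l, ∀ u : V, e.1 ≠ Sum.inl u) : innerEdges l = [] := by
  rw [innerEdges, List.filterMap_eq_nil_iff]
  rintro ⟨x, y⟩ hmem
  rcases x with x | x
  · exact absurd rfl (h _ hmem x)
  · rcases y with y | y <;> rfl

lemma innerEdges_append (l₁ l₂ : List ((V ⊕ A) × (V ⊕ A))) :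
    innerEdges (l₁ ++ l₂) = innerEdges l₁ ++ innerEdges l₂ :=
  List.filterMap_append

lemma innerEdges_cons_src (a : A) (y : V ⊕ A) (l : List ((V ⊕ A) × (V ⊕ A))) :
    innerEdges ((Sum.inr a, y) :: l) = innerEdges l := by
  rcases y with y | y <;> rfl

lemma innerEdges_cons_to_tail (x : V ⊕ A) (b : A) (l : List ((V ⊕ A) × (V ⊕ A))) :
    innerEdges ((x, Sum.inr b) :: l) = innerEdges l := by
  rcases x with x | x <;> rfl

lemma innerEdges_map_inl (l : List (V × V)) :
    innerEdges (l.map (Prod.map Sum.inl (Sum.inl : V → V ⊕ A))) = l := by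
  induction l with
  | nil => rfl
  | cons e l ih =>
    rcases e with ⟨u, v⟩
    simp only [List.map_cons, innerEdges, List.filterMap_cons, Prod.map] at ih ⊢
    rw [ih]

end Inner

def decMem {α : Type} [DecidableEq α] (e : α) (l : List α) : Decidable (e ∈ l) :=
  decidable_of_iff (∃ x ∈ l, x = e) (by simp)

lemma length_le_of_nodup_subset {α : Type} {l₁ l₂ : List α}
    (h₁ : l₁.Nodup) (h₂ : l₁ ⊆ l₂) : l₁.length ≤ l₂.length :=
  (List.subperm_of_subset h₁ h₂).length_le

end Stmt8Aux



/-- In the tail-construction graph `G'` with indicator weights coming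
from chosen paths `Rᵢ` from `sᵢ'` to `tᵢ'`: if `P₁, …, P_k` are pairwise edge-disjoint
paths, `Pᵢ` starting at `sᵢ'` and ending at some vertex of outdegree 0, of total cost at
least `k² · |V|`, then each `Pᵢ` ends at `tᵢ'` and passes through `sᵢ` and `tᵢ`, and the
portions of the `Pᵢ` lying inside `G` form `k` pairwise edge-disjoint paths in `G`, the
`i`-th going from `sᵢ` to `tᵢ`. -/

theorem stmt8 {V : Type} [Fintype V] [DecidableEq V] (E : Finset (V × V)) (k : ℕ)
    (s t : Fin k → V) (hacyc : Acyclic E) (hac : AntConservation E k s t)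
    (t' : Fin k → V ⊕ Fin k ⊕ Fin k × Fin (k * Fintype.card V))
    (ht' : ∀ i, IsLastTail i (t' i))
    (R : Fin k → List (V ⊕ Fin k ⊕ Fin k × Fin (k * Fintype.card V)))
    (hR : ∀ i, IsPathFrom (tailEdges E s t) (R i) (Sum.inr (Sum.inl i)) (t' i))
    (w : Fin k → (V ⊕ Fin k ⊕ Fin k × Fin (k * Fintype.card V)) ×
                 (V ⊕ Fin k ⊕ Fin k × Fin (k * Fintype.card V)) → ℕ)
    (hw : ∀ i e, (e ∈ pathEdges (R i) → w i e = 1) ∧ (e ∉ pathEdges (R i) → w i e = 0))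
    (P : Fin k → List (V ⊕ Fin k ⊕ Fin k × Fin (k * Fintype.card V)))
    (hPdisj : EdgeDisjoint P)
    (hP : ∀ i, ∃ z, outdeg (tailEdges E s t) z = 0 ∧
      IsPathFrom (tailEdges E s t) (P i) (Sum.inr (Sum.inl i)) z)
    (hcost : k ^ 2 * Fintype.card V ≤ ∑ i, listWeight (w i) (P i)) :
    (∀ i, (P i).getLast? = some (t' i) ∧
      Sum.inl (s i) ∈ P i ∧ Sum.inl (t i) ∈ P i) ∧
    ∃ Q : Fin k → List V,
      EdgeDisjoint Q ∧
      (∀ i, IsPathFrom E (Q i) (s i) (t i)) ∧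
      (∀ i, pathEdges (Q i) = innerEdges (pathEdges (P i))) := by
  classical
  letI : ∀ (e : (V ⊕ Fin k ⊕ Fin k × Fin (k * Fintype.card V)) ×
      (V ⊕ Fin k ⊕ Fin k × Fin (k * Fintype.card V)))
      (l : List ((V ⊕ Fin k ⊕ Fin k × Fin (k * Fintype.card V)) ×
      (V ⊕ Fin k ⊕ Fin k × Fin (k * Fintype.card V)))), Decidable (e ∈ l) :=
    fun e l => Stmt8Aux.decMem e l
  rcases Nat.eq_zero_or_pos k with hk0 | hk
  · subst hk0
    exact ⟨fun i => i.elim0, fun _ => [], fun i => i.elim0, fun i => i.elim0,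
      fun i => i.elim0⟩
  have hV : 0 < Fintype.card V := Fintype.card_pos_iff.mpr ⟨s ⟨0, hk⟩⟩
  have hkn : 0 < k * Fintype.card V := Nat.mul_pos hk hV
  -- shape of each P i
  have hPshape : ∀ i, ∃ (q : List V) (j : Fin k),
      q.head? = some (s i) ∧ q.getLast? = some (t j) ∧
      q.Chain' (fun u w => (u, w) ∈ E) ∧
      P i = Sum.inr (Sum.inl i) :: (q.map Sum.inl ++ Stmt8Aux.TLfrom 0 j) := by
    intro i
    obtain ⟨z, hzdeg, ⟨⟨hne, hnd, hc⟩, hhd, hlast⟩⟩ := hP i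
    refine Stmt8Aux.shape E s t hac.dests hkn (P i) i hc hhd ?_
    intro z' hz'
    rw [hlast] at hz'
    injection hz' with hz'
    exact hz' ▸ hzdeg
  choose q jf hqh hql hqc hPeq using hPshape
  -- shape of each R i
  have hRshape : ∀ i, ∃ r : List V,
      r.head? = some (s i) ∧ r.getLast? = some (t i) ∧
      r.Chain' (fun u w => (u, w) ∈ E) ∧
      R i = Sum.inr (Sum.inl i) :: (r.map Sum.inl ++ Stmt8Aux.TLfrom 0 i) := by
    intro i
    obtain ⟨⟨hne, hnd, hc⟩, hhd, hlast⟩ := hR i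
    obtain ⟨m, hm1, hm2⟩ := ht' i
    obtain ⟨r, j', h1, h2, h3, h4⟩ := Stmt8Aux.shape E s t hac.dests hkn (R i) i hc hhd
      (fun z hz => by
        rw [hlast] at hz
        injection hz with hz
        rw [← hz, hm2]
        exact Stmt8Aux.outdeg_tail_last E s t i m hm1)
    have hL : (R i).getLast? =
        some (Sum.inr (Sum.inr (j', (⟨k * Fintype.card V - 1, by omega⟩ :
          Fin (k * Fintype.card V))))) := by
      rw [h4,
        show (Sum.inr (Sum.inl i) :: (r.map Sum.inl ++ Stmt8Aux.TLfrom 0 j') :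
          List (V ⊕ Fin k ⊕ Fin k × Fin (k * Fintype.card V))) =
          (Sum.inr (Sum.inl i) :: r.map Sum.inl) ++ Stmt8Aux.TLfrom 0 j' from by simp,
        List.getLast?_append_of_ne_nil _ (Stmt8Aux.TLfrom_ne_nil hkn j'),
        Stmt8Aux.TLfrom_getLast hkn]
    rw [hlast, hm2] at hL
    simp only [Option.some.injEq, Sum.inr.injEq, Prod.mk.injEq] at hL
    obtain ⟨h5, -⟩ := hL
    subst h5
    exact ⟨r, h1, h2, h3, h4⟩
  choose r hrh hrl hrc hReq using hRshape
  -- basic facts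
  have hPnd : ∀ i, (P i).Nodup := by
    intro i
    obtain ⟨z, hz, hpf⟩ := hP i
    exact hpf.1.2.1
  have hqne : ∀ i, q i ≠ [] := by
    intro i h
    have := hqh i
    rw [h] at this
    simp at this
  have hrne : ∀ i, r i ≠ [] := by
    intro i h
    have := hrh i
    rw [h] at this
    simp at this
  have hqnd : ∀ i, (q i).Nodup := by
    intro i
    have := hPnd i
    rw [hPeq i] at this
    have h2 := (List.nodup_cons.mp this).2
    exact ((List.nodup_append.mp h2).1).of_map
  have hrnd : ∀ i, (r i).Nodup := by
    intro i
    have := (hR i).1.2.1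
    rw [hReq i] at this
    have h2 := (List.nodup_cons.mp this).2
    exact ((List.nodup_append.mp h2).1).of_map
  -- vertex characterization of P i
  have hPmem : ∀ i x, x ∈ P i → x = Sum.inr (Sum.inl i) ∨ (∃ v, x = Sum.inl v) ∨
      ∃ m', x = Sum.inr (Sum.inr (jf i, m')) := by
    intro i x hx
    rw [hPeq i] at hx
    simp only [List.mem_cons, List.mem_append] at hx
    rcases hx with h | h | h
    · exact Or.inl h
    · obtain ⟨v, -, rfl⟩ := List.mem_map.mp h
      exact Or.inr (Or.inl ⟨v, rfl⟩)
    · exact Or.inr (Or.inr (Stmt8Aux.mem_TLfrom h))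
  -- the ending tails are pairwise distinct
  have hjinj : Function.Injective jf := by
    intro a b hab
    by_contra hne
    have hmem : ∀ c, (Sum.inl (t (jf c)), Sum.inr (Sum.inr (jf c, ⟨0, hkn⟩))) ∈
        pathEdges (P c) := by
      intro c
      rw [hPeq c]
      refine Stmt8Aux.mem_pathEdges_cons _ (Stmt8Aux.mem_pathEdges_boundary ?_ ?_)
      · rw [List.getLast?_map, hql c]
        rfl
      · exact Stmt8Aux.TLfrom_head hkn (jf c)
    have hea := hmem a
    have heb := hmem b
    rw [← hab] at heb
    exact (hPdisj a b hne _ hea) heb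
  -- weight bounds
  have hwb : ∀ i, listWeight (w i) (P i) ≤
      ((pathEdges (P i)).filter (fun e : (V ⊕ Fin k ⊕ Fin k × Fin (k * Fintype.card V)) × (V ⊕ Fin k ⊕ Fin k × Fin (k * Fintype.card V)) => decide (e ∈ pathEdges (R i)))).length := by
    intro i
    refine Stmt8Aux.sum_map_le_length_filter _ _ _ ?_
    intro e he
    by_cases hm : e ∈ pathEdges (R i)
    · simp only [hm, decide_true, if_true]
      exact le_of_eq ((hw i e).1 hm)
    · simp only [hm, decide_false, if_false]
      exact le_of_eq ((hw i e).2 hm)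
  have hfilnd : ∀ i, ((pathEdges (P i)).filter
      (fun e : (V ⊕ Fin k ⊕ Fin k × Fin (k * Fintype.card V)) × (V ⊕ Fin k ⊕ Fin k × Fin (k * Fintype.card V)) => decide (e ∈ pathEdges (R i)))).Nodup :=
    fun i => (Stmt8Aux.pathEdges_nodup (hPnd i)).filter _
  have hRlen : ∀ i, (pathEdges (R i)).length = (r i).length + k * Fintype.card V := by
    intro i
    rw [Stmt8Aux.length_pathEdges, hReq i]
    simp only [List.length_cons, List.length_append, List.length_map,
      Stmt8Aux.TLfrom_length]
    omega
  have hrlen : ∀ i, (r i).length ≤ Fintype.card V := fun i => (hrnd i).length_le_card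
  have hmatched : ∀ i, listWeight (w i) (P i) ≤
      Fintype.card V + k * Fintype.card V := by
    intro i
    refine le_trans (hwb i) (le_trans
      (Stmt8Aux.length_le_of_nodup_subset (l₂ := pathEdges (R i)) (hfilnd i) ?_) ?_)
    · intro e he
      rw [List.mem_filter] at he
      exact of_decide_eq_true he.2
    · rw [hRlen i]
      have := hrlen i
      omega
  -- refined bound for mismatched paths
  have hmis : ∀ i, jf i ≠ i → listWeight (w i) (P i) ≤ Fintype.card V := by
    intro i hnei
    have hnotail : ∀ m' : Fin (k * Fintype.card V),
        (Sum.inr (Sum.inr (i, m')) : V ⊕ Fin k ⊕ Fin k × Fin (k * Fintype.card V)) ∉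
          P i := by
      intro m' hmm
      rcases hPmem i _ hmm with h | ⟨v, h⟩ | ⟨m'', h⟩
      · simp at h
      · simp at h
      · simp only [Sum.inr.injEq, Prod.mk.injEq] at h
        exact hnei h.1.symm
    -- decompose pathEdges (R i)
    have hAl : ((Sum.inr (Sum.inl i) :: (r i).map Sum.inl :
        List (V ⊕ Fin k ⊕ Fin k × Fin (k * Fintype.card V)))).getLast? =
        some (Sum.inl (t i)) := by
      rw [show (Sum.inr (Sum.inl i) :: (r i).map Sum.inl :
            List (V ⊕ Fin k ⊕ Fin k × Fin (k * Fintype.card V))) =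
          [Sum.inr (Sum.inl i)] ++ (r i).map Sum.inl from rfl,
        List.getLast?_append_of_ne_nil _ (by simp [hrne i]),
        List.getLast?_map, hrl i]
      rfl
    have hRdec : pathEdges (R i) =
        pathEdges (Sum.inr (Sum.inl i) :: (r i).map Sum.inl) ++
        ((Sum.inl (t i), Sum.inr (Sum.inr (i, (⟨0, hkn⟩ : Fin (k * Fintype.card V))))) ::
          pathEdges (Stmt8Aux.TLfrom 0 i)) := by
      rw [hReq i, Stmt8Aux.TLfrom_cons 0 hkn i]
      rw [show (Sum.inr (Sum.inl i) :: ((r i).map Sum.inl ++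
            (Sum.inr (Sum.inr (i, ⟨0, hkn⟩)) :: Stmt8Aux.TLfrom 1 i)) :
            List (V ⊕ Fin k ⊕ Fin k × Fin (k * Fintype.card V))) =
          (Sum.inr (Sum.inl i) :: (r i).map Sum.inl) ++
            (Sum.inr (Sum.inr (i, ⟨0, hkn⟩)) :: Stmt8Aux.TLfrom 1 i) from by simp]
      rw [Stmt8Aux.pathEdges_append _ _ _,
        Stmt8Aux.pathEdges_concat_eq _ hAl, ← Stmt8Aux.TLfrom_cons 0 hkn i]
      simp
    refine le_trans (hwb i) ?_
    have hsub : ((pathEdges (P i)).filter (fun e : (V ⊕ Fin k ⊕ Fin k × Fin (k * Fintype.card V)) × (V ⊕ Fin k ⊕ Fin k × Fin (k * Fintype.card V)) => decide (e ∈ pathEdges (R i)))) ⊆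
        pathEdges (Sum.inr (Sum.inl i) :: (r i).map Sum.inl) := by
      intro e he
      rw [List.mem_filter] at he
      obtain ⟨heP, heR'⟩ := he
      have heR := of_decide_eq_true heR'
      rw [hRdec] at heR
      rcases List.mem_append.mp heR with h | h
      · exact h
      · exfalso
        rcases List.mem_cons.mp h with h | h
        · subst h
          exact hnotail _ ((Stmt8Aux.mem_of_mem_pathEdges heP).2)
        · rcases e with ⟨e1, e2⟩
          have he1 : e1 ∈ Stmt8Aux.TLfrom 0 i := (Stmt8Aux.mem_of_mem_pathEdges h).1
          obtain ⟨m', rfl⟩ := Stmt8Aux.mem_TLfrom he1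
          exact hnotail m' ((Stmt8Aux.mem_of_mem_pathEdges heP).1)
    refine le_trans (Stmt8Aux.length_le_of_nodup_subset (hfilnd i) hsub) ?_
    rw [Stmt8Aux.length_pathEdges]
    simp only [List.length_cons, List.length_map]
    have := hrlen i
    omega
  -- every path ends on its own tail
  have hjid : ∀ i, jf i = i := by
    by_contra hcon
    push_neg at hcon
    obtain ⟨i₀, hi₀⟩ := hcon
    obtain ⟨i₁, hne01, hi₁⟩ : ∃ i₁, i₁ ≠ i₀ ∧ jf i₁ ≠ i₁ := by
      by_cases hex : ∃ i₁, i₁ ≠ i₀ ∧ jf i₁ ≠ i₁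
      · exact hex
      · push_neg at hex
        exfalso
        exact hi₀ (hjinj (hex (jf i₀) hi₀))
    have hkey : ∀ i : Fin k, listWeight (w i) (P i) +
        (if i = i₀ ∨ i = i₁ then k * Fintype.card V else 0) ≤
        Fintype.card V + k * Fintype.card V := by
      intro i
      by_cases hi : i = i₀ ∨ i = i₁
      · rw [if_pos hi]
        have hii : jf i ≠ i := by
          rcases hi with rfl | rfl
          · exact hi₀
          · exact hi₁
        have := hmis i hii
        omega
      · rw [if_neg hi]
        simpa using hmatched i
    have hsum2 : (∑ i : Fin k, (if i = i₀ ∨ i = i₁ then k * Fintype.card V else 0)) =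
        2 * (k * Fintype.card V) := by
      have heq : ∀ i : Fin k, (if i = i₀ ∨ i = i₁ then k * Fintype.card V else 0) =
          if i ∈ ({i₀, i₁} : Finset (Fin k)) then k * Fintype.card V else 0 := by
        intro i
        simp [Finset.mem_insert]
      rw [Finset.sum_congr rfl (fun i _ => heq i), Finset.sum_ite_mem,
        Finset.univ_inter, Finset.sum_const,
        Finset.card_insert_of_notMem (Finset.notMem_singleton.mpr (Ne.symm hne01)), Finset.card_singleton]
      simp [mul_comm]
    have htot : k ^ 2 * Fintype.card V + 2 * (k * Fintype.card V) ≤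
        k * (Fintype.card V + k * Fintype.card V) := by
      calc k ^ 2 * Fintype.card V + 2 * (k * Fintype.card V)
          ≤ (∑ i, listWeight (w i) (P i)) +
            (∑ i : Fin k, (if i = i₀ ∨ i = i₁ then k * Fintype.card V else 0)) :=
            add_le_add hcost (le_of_eq hsum2.symm)
        _ = ∑ i : Fin k, (listWeight (w i) (P i) +
            (if i = i₀ ∨ i = i₁ then k * Fintype.card V else 0)) :=
            (Finset.sum_add_distrib).symm
        _ ≤ ∑ _i : Fin k, (Fintype.card V + k * Fintype.card V) :=
            Finset.sum_le_sum (fun i _ => hkey i)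
        _ = k * (Fintype.card V + k * Fintype.card V) := by
            rw [Finset.sum_const, Finset.card_univ, Fintype.card_fin, smul_eq_mul]
    have h2 : k * (Fintype.card V + k * Fintype.card V) =
        k * Fintype.card V + k * (k * Fintype.card V) := by ring
    have hq2 : k ^ 2 * Fintype.card V = k * (k * Fintype.card V) := by ring
    rw [h2, hq2] at htot
    linarith [htot, hkn]
  -- the inner part of each P i
  have hinner : ∀ i, pathEdges (q i) = innerEdges (pathEdges (P i)) := by
    intro i
    obtain ⟨q₀, q', hq'⟩ := List.exists_cons_of_ne_nil (hqne i)
    have hgl : ((q i).map (Sum.inl : V → V ⊕ Fin k ⊕ Fin k ×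
        Fin (k * Fintype.card V))).getLast? = some (Sum.inl (t i)) := by
      rw [List.getLast?_map, hql i, hjid i]
      rfl
    have key : pathEdges (P i) =
        (Sum.inr (Sum.inl i), Sum.inl q₀) ::
        (pathEdges ((q i).map Sum.inl) ++
          ((Sum.inl (t i), Sum.inr (Sum.inr (i, (⟨0, hkn⟩ : Fin (k * Fintype.card V))))) ::
            pathEdges (Stmt8Aux.TLfrom 0 i))) := by
      rw [hPeq i, hjid i]
      conv_lhs => rw [hq']
      rw [List.map_cons]
      rw [show (Sum.inr (Sum.inl i) :: (Sum.inl q₀ :: q'.map Sum.inl ++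
            Stmt8Aux.TLfrom 0 i) :
            List (V ⊕ Fin k ⊕ Fin k × Fin (k * Fintype.card V))) =
          Sum.inr (Sum.inl i) :: Sum.inl q₀ :: (q'.map Sum.inl ++ Stmt8Aux.TLfrom 0 i)
          from rfl]
      rw [Stmt8Aux.pathEdges_cons_cons]
      rw [show (Sum.inl q₀ :: (q'.map Sum.inl ++ Stmt8Aux.TLfrom 0 i) :
            List (V ⊕ Fin k ⊕ Fin k × Fin (k * Fintype.card V))) =
          (Sum.inl q₀ :: q'.map Sum.inl) ++ Stmt8Aux.TLfrom 0 i from rfl]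
      conv_lhs => rw [Stmt8Aux.TLfrom_cons 0 hkn i]
      rw [Stmt8Aux.pathEdges_append _ _ _]
      rw [show ((Sum.inl q₀ :: q'.map Sum.inl :
            List (V ⊕ Fin k ⊕ Fin k × Fin (k * Fintype.card V)))) =
          (q i).map Sum.inl from by rw [hq', List.map_cons]]
      rw [Stmt8Aux.pathEdges_concat_eq _ hgl, ← Stmt8Aux.TLfrom_cons 0 hkn i]
      simp
    rw [key]
    rw [Stmt8Aux.innerEdges_cons_src, Stmt8Aux.innerEdges_append,
      Stmt8Aux.innerEdges_cons_to_tail]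
    rw [Stmt8Aux.innerEdges_eq_nil (l := pathEdges (Stmt8Aux.TLfrom 0 i)) ?_]
    · rw [Stmt8Aux.pathEdges_map, Stmt8Aux.innerEdges_map_inl]
      simp
    · rintro ⟨e1, e2⟩ hmm u
      have he1 : e1 ∈ Stmt8Aux.TLfrom 0 i := (Stmt8Aux.mem_of_mem_pathEdges hmm).1
      obtain ⟨m', rfl⟩ := Stmt8Aux.mem_TLfrom he1
      simp
  -- final assembly
  constructor
  · intro i
    obtain ⟨m, hm1, hm2⟩ := ht' i
    refine ⟨?_, ?_, ?_⟩
    · have hPlast : (P i).getLast? = some (Sum.inr (Sum.inr (jf i,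
          (⟨k * Fintype.card V - 1, by omega⟩ : Fin (k * Fintype.card V))))) := by
        rw [hPeq i,
          show (Sum.inr (Sum.inl i) :: ((q i).map Sum.inl ++ Stmt8Aux.TLfrom 0 (jf i)) :
            List (V ⊕ Fin k ⊕ Fin k × Fin (k * Fintype.card V))) =
            (Sum.inr (Sum.inl i) :: (q i).map Sum.inl) ++ Stmt8Aux.TLfrom 0 (jf i)
            from by simp,
          List.getLast?_append_of_ne_nil _ (Stmt8Aux.TLfrom_ne_nil hkn _),
          Stmt8Aux.TLfrom_getLast hkn]
      have hmeq : m = (⟨k * Fintype.card V - 1, by omega⟩ : Fin (k * Fintype.card V)) :=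
        Fin.ext (by show (m : ℕ) = k * Fintype.card V - 1; omega)
      rw [hm2, hmeq]
      exact hPlast.trans (by rw [hjid i])
    · rw [hPeq i]
      have hs : s i ∈ q i := List.mem_of_mem_head? (by rw [hqh i]; rfl)
      simp only [List.mem_cons, List.mem_append]
      exact Or.inr (Or.inl (List.mem_map_of_mem hs))
    · rw [hPeq i]
      have ht2 : t i ∈ q i := by
        have := hql i
        rw [hjid i] at this
        exact List.mem_of_mem_getLast? (by rw [this]; rfl)
      simp only [List.mem_cons, List.mem_append]
      exact Or.inr (Or.inl (List.mem_map_of_mem ht2))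
  · refine ⟨q, ?_, ?_, fun i => hinner i⟩
    · intro a b hab e hea heb
      rcases e with ⟨u, v⟩
      rw [hinner a] at hea
      rw [hinner b] at heb
      exact (hPdisj a b hab _ (Stmt8Aux.mem_innerEdges.mp hea))
        (Stmt8Aux.mem_innerEdges.mp heb)
    · intro i
      refine ⟨⟨hqne i, hqnd i, hqc i⟩, hqh i, ?_⟩
      rw [hql i, hjid i]
end

section
/- Let G = (V, E) be a finite directed acyclic graph satisfying the ant-conservation condition with sources s_1, …, s_k and destinations t_1, …, t_k, let G' be the graph obtained by the tail construction, and let the weights w_e^i be defined from chosen paths R_i from s_i' to t_i'. Then G contains k pairwise edge-disjoint directed paths, the i-th from s_i to t_i, if and only if G' contains k pairwise edge-disjoint directed paths P_1, …, P_k, with P_i starting at s_i' and ending at some vertex of outdegree 0, whose total cost Σ_{i=1}^k Σ_{e ∈ P_i} w_e^i is at least k²·|V|. -/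
namespace Stmt9Aux

open List

variable {α β : Type}

theorem pathEdges_nil : pathEdges ([] : List α) = [] := rfl
theorem pathEdges_single (a : α) : pathEdges [a] = [] := rfl
theorem pathEdges_cons_cons (a b : α) (l : List α) :
    pathEdges (a :: b :: l) = (a, b) :: pathEdges (b :: l) := rfl

theorem pathEdges_cons (a : α) (l : List α) (h : l ≠ []) :
    pathEdges (a :: l) = (a, l.head h) :: pathEdges l := by
  cases l with
  | nil => exact absurd rfl h
  | cons b l => rfl

theorem pathEdges_append (l₁ l₂ : List α) (h₁ : l₁ ≠ []) (h₂ : l₂ ≠ []) :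
    pathEdges (l₁ ++ l₂) =
      pathEdges l₁ ++ (l₁.getLast h₁, l₂.head h₂) :: pathEdges l₂ := by
  induction l₁ with
  | nil => exact absurd rfl h₁
  | cons a l₁ ih =>
    cases l₁ with
    | nil =>
      simp only [List.nil_append, List.singleton_append]
      rw [pathEdges_cons a l₂ h₂]
      simp [pathEdges_single, List.getLast]
    | cons b l₁ =>
      have hne : (b :: l₁ : List α) ≠ [] := by simp
      have e1 : pathEdges ((a :: b :: l₁) ++ l₂) = (a, b) :: pathEdges ((b :: l₁) ++ l₂) := rfl
      rw [e1, ih hne, pathEdges_cons_cons]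
      simp [List.getLast_cons hne]

theorem pathEdges_map (f : α → β) (l : List α) :
    pathEdges (l.map f) = (pathEdges l).map (Prod.map f f) := by
  unfold pathEdges
  rw [← List.map_tail, List.zip_map]

theorem map_fst_pathEdges (l : List α) : (pathEdges l).map Prod.fst = l.dropLast := by
  induction l with
  | nil => rfl
  | cons a l ih =>
    cases l with
    | nil => rfl
    | cons b l =>
      rw [pathEdges_cons_cons]
      simp only [List.map_cons, ih]
      rfl

theorem map_snd_pathEdges (l : List α) : (pathEdges l).map Prod.snd = l.tail := by
  unfold pathEdges
  exact List.map_snd_zip (by cases l <;> simp)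

theorem pathEdges_nodup {l : List α} (h : l.Nodup) : (pathEdges l).Nodup := by
  have := (map_fst_pathEdges l) ▸ (h.sublist l.dropLast_sublist)
  exact this.of_map _

theorem fst_mem_dropLast {l : List α} {u v : α} (h : (u, v) ∈ pathEdges l) :
    u ∈ l.dropLast := by
  rw [← map_fst_pathEdges]; exact List.mem_map_of_mem h

theorem snd_mem_tail {l : List α} {u v : α} (h : (u, v) ∈ pathEdges l) :
    v ∈ l.tail := by
  rw [← map_snd_pathEdges]; exact List.mem_map_of_mem h

theorem exists_pred_of_mem_tail {l : List α} {v : α} (h : v ∈ l.tail) :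
    ∃ u, (u, v) ∈ pathEdges l := by
  rw [← map_snd_pathEdges] at h
  obtain ⟨⟨u, v'⟩, hm, rfl⟩ := List.mem_map.mp h
  exact ⟨u, hm⟩

theorem exists_succ_of_mem_dropLast {l : List α} {u : α} (h : u ∈ l.dropLast) :
    ∃ v, (u, v) ∈ pathEdges l := by
  rw [← map_fst_pathEdges] at h
  obtain ⟨⟨u', v⟩, hm, rfl⟩ := List.mem_map.mp h
  exact ⟨v, hm⟩

theorem succ_unique {l : List α} (hl : l.Nodup) {u v v' : α}
    (h : (u, v) ∈ pathEdges l) (h' : (u, v') ∈ pathEdges l) : v = v' := by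
  have hn : ((pathEdges l).map Prod.fst).Nodup := by
    rw [map_fst_pathEdges]; exact hl.sublist l.dropLast_sublist
  have := List.inj_on_of_nodup_map hn h h' rfl
  exact congrArg Prod.snd this

theorem snd_injOn {l : List α} (hl : l.Nodup) {e e' : α × α}
    (h : e ∈ pathEdges l) (h' : e' ∈ pathEdges l) (he : e.2 = e'.2) : e = e' := by
  have hn : ((pathEdges l).map Prod.snd).Nodup := by
    rw [map_snd_pathEdges]; exact hl.tail
  exact List.inj_on_of_nodup_map hn h h' he

theorem mem_pathEdges_getElem (l : List α) (m : ℕ) (h : m + 1 < l.length) :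
    (l[m], l[m+1]) ∈ pathEdges l := by
  have h1 : m < (pathEdges l).length := by
    unfold pathEdges
    simpa using by omega
  have : (pathEdges l)[m] = (l[m], l[m+1]) := by
    rw [List.getElem_of_eq (show pathEdges l = l.zip l.tail from rfl)]
    simp
  rw [← this]
  exact List.getElem_mem h1

theorem pathEdges_subset_append_right (l₁ l₂ : List α) :
    pathEdges l₂ ⊆ pathEdges (l₁ ++ l₂) := by
  rcases eq_or_ne l₁ [] with rfl | h₁
  · simp
  rcases eq_or_ne l₂ [] with rfl | h₂
  · simp [pathEdges_nil]
  rw [pathEdges_append l₁ l₂ h₁ h₂]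
  intro e he
  exact List.mem_append_right _ (List.mem_cons_of_mem _ he)

theorem pathEdges_subset_append_left (l₁ l₂ : List α) :
    pathEdges l₁ ⊆ pathEdges (l₁ ++ l₂) := by
  rcases eq_or_ne l₁ [] with rfl | h₁
  · simp [pathEdges_nil]
  rcases eq_or_ne l₂ [] with rfl | h₂
  · simp
  rw [pathEdges_append l₁ l₂ h₁ h₂]
  intro e he
  exact List.mem_append_left _ he

theorem pathEdges_infix {l l' : List α} (h : l <:+: l') :
    pathEdges l ⊆ pathEdges l' := by
  obtain ⟨l₁, l₂, rfl⟩ := h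
  intro e he
  rw [List.append_assoc]
  exact pathEdges_subset_append_right l₁ _
    (pathEdges_subset_append_left _ l₂ he)

theorem mem_dropLast_of_ne_getLast {l : List α} {v : α} (hv : v ∈ l)
    (hne : l ≠ []) (h : v ≠ l.getLast hne) : v ∈ l.dropLast := by
  conv at hv => rw [← l.dropLast_append_getLast hne]
  rcases List.mem_append.mp hv with h' | h'
  · exact h'
  · simp at h'; exact absurd h' h


theorem chain'_pathEdges {R : α → α → Prop} {l : List α} (h : l.Chain' R) {u v : α}
    (he : (u, v) ∈ pathEdges l) : R u v := by
  induction l with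
  | nil => simp [pathEdges_nil] at he
  | cons a l ih =>
    cases l with
    | nil => simp [pathEdges_single] at he
    | cons b l =>
      rw [pathEdges_cons_cons] at he
      rcases List.mem_cons.mp he with h' | h'
      · obtain ⟨h1, h2⟩ := Prod.mk.injEq .. ▸ h'
        subst h1; subst h2
        exact (List.isChain_cons_cons.mp h).1
      · exact ih (List.isChain_cons_cons.mp h).2 h'

theorem mem_tail_of_ne_head {l : List α} {a v : α} (hh : l.head? = some a)
    (hv : v ∈ l) (hne : v ≠ a) : v ∈ l.tail := by
  cases l with
  | nil => simp at hv
  | cons b l =>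
    simp only [List.head?_cons, Option.some_inj] at hh
    subst hh
    rcases List.mem_cons.mp hv with rfl | h
    · exact absurd rfl hne
    · exact h

theorem dropWhile_head_not {p : α → Bool} {l : List α} {y : α}
    (h : (l.dropWhile p).head? = some y) : ¬ p y = true := by
  induction l with
  | nil => simp at h
  | cons a l ih =>
    rw [List.dropWhile_cons] at h
    by_cases hpa : p a
    · rw [if_pos hpa] at h
      exact ih h
    · rw [if_neg hpa] at h
      simp only [List.head?_cons, Option.some_inj] at h
      subst h
      exact hpa

theorem exists_map_inl {γ δ : Type} {l : List (γ ⊕ δ)} (h : ∀ x ∈ l, x.isLeft) :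
    ∃ q : List γ, l = q.map Sum.inl := by
  induction l with
  | nil => exact ⟨[], rfl⟩
  | cons a l ih =>
    obtain ⟨q, hq⟩ := ih (fun x hx => h x (List.mem_cons_of_mem _ hx))
    cases a with
    | inl a => exact ⟨a :: q, by simp [hq]⟩
    | inr a => simpa using h (Sum.inr a) (List.mem_cons_self)


section Graph

variable {V : Type} [Fintype V] [DecidableEq V] {k : ℕ} (E : Finset (V × V)) (s t : Fin k → V)

/-- The `m`-th vertex of the `i`-th tail. -/
def inTail (i : Fin k) (m : Fin (k * Fintype.card V)) :
    V ⊕ Fin k ⊕ Fin k × Fin (k * Fintype.card V) := Sum.inr (Sum.inr (i, m))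

theorem inTail_injective2 {i j : Fin k} {m m'} (h : inTail (V := V) i m = inTail j m') :
    i = j ∧ m = m' := by
  simp only [inTail, Sum.inr.injEq, Prod.mk.injEq] at h
  exact h

theorem mem_tailEdges {e} : e ∈ tailEdges E s t ↔ tailAdj E s t e = true := by
  simp [tailEdges]

/-- The unique in-neighbour of the tail vertex `t_{i,m+1}`. -/
def predV (i : Fin k) (m : Fin (k * Fintype.card V)) :
    V ⊕ Fin k ⊕ Fin k × Fin (k * Fintype.card V) :=
  if _ : (m : ℕ) = 0 then Sum.inl (t i)
  else inTail i ⟨(m : ℕ) - 1, by have := m.isLt; omega⟩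

theorem edge_into_tail {x} {i : Fin k} {m} :
    (x, inTail i m) ∈ tailEdges E s t ↔ x = predV t i m := by
  rw [mem_tailEdges]
  rcases x with u | j | ⟨j, m'⟩
  · unfold predV
    by_cases h0 : (m : ℕ) = 0
    · rw [dif_pos h0]
      simp only [inTail, tailAdj, Bool.and_eq_true, decide_eq_true_eq, h0,
        Sum.inl.injEq]
      simp
    · rw [dif_neg h0]
      simp only [inTail, tailAdj, Bool.and_eq_true, decide_eq_true_eq, h0]
      simp
  · unfold predV
    split <;> simp [inTail, tailAdj]
  · unfold predV
    by_cases h0 : (m : ℕ) = 0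
    · rw [dif_pos h0]
      simp only [inTail, tailAdj, Bool.and_eq_true, decide_eq_true_eq]
      constructor
      · rintro ⟨rfl, hm⟩; omega
      · rintro h; exact absurd h (by simp)
    · rw [dif_neg h0]
      simp only [inTail, tailAdj, Bool.and_eq_true, decide_eq_true_eq,
        Sum.inr.injEq, Prod.mk.injEq, Fin.ext_iff]
      constructor
      · rintro ⟨h, hm⟩; exact ⟨h, by omega⟩
      · rintro ⟨h, hm⟩; exact ⟨h, by omega⟩

theorem edge_from_source {x} {i : Fin k} :
    (Sum.inr (Sum.inl i), x) ∈ tailEdges E s t ↔ x = Sum.inl (s i) := by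
  rw [mem_tailEdges]
  rcases x with v | j | ⟨j, m⟩ <;> simp [tailAdj]

theorem no_edge_into_source {x} {j : Fin k} :
    (x, Sum.inr (Sum.inl j)) ∉ tailEdges E s t := by
  rw [mem_tailEdges]
  rcases x with v | j' | ⟨j', m⟩ <;> simp [tailAdj]

theorem edge_from_inl {u : V} {x} :
    (Sum.inl u, x) ∈ tailEdges E s t ↔
      (∃ v, x = Sum.inl v ∧ (u, v) ∈ E) ∨
      (∃ (j : Fin k) (m : Fin (k * Fintype.card V)),
        (m : ℕ) = 0 ∧ u = t j ∧ x = inTail j m) := by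
  rw [mem_tailEdges]
  rcases x with v | j | ⟨j, m⟩ <;> simp [tailAdj, inTail] <;> aesop

theorem edge_from_tail {i : Fin k} {m} {x} :
    (inTail i m, x) ∈ tailEdges E s t ↔
      ∃ m' : Fin (k * Fintype.card V), (m' : ℕ) = (m : ℕ) + 1 ∧ x = inTail i m' := by
  rw [mem_tailEdges]
  rcases x with v | j | ⟨j, m'⟩ <;> simp [tailAdj, inTail] <;> aesop

theorem stuck_all {l : List (V ⊕ Fin k ⊕ Fin k × Fin (k * Fintype.card V))} (hc : l.Chain' (fun u v => (u, v) ∈ tailEdges E s t))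
    {i : Fin k} (m) (hh : l.head? = some (inTail i m)) :
    ∀ x ∈ l, ∃ m', x = inTail i m' := by
  induction l generalizing m with
  | nil => simp at hh
  | cons a l ih =>
    simp only [List.head?_cons, Option.some_inj] at hh
    subst hh
    intro x hx
    rcases List.mem_cons.mp hx with rfl | hx
    · exact ⟨m, rfl⟩
    · cases l with
      | nil => simp at hx
      | cons b l =>
        have he : (inTail i m, b) ∈ tailEdges E s t := (List.isChain_cons_cons.mp hc).1
        obtain ⟨m', -, rfl⟩ := (edge_from_tail E s t).mp he
        exact ih (List.isChain_cons_cons.mp hc).2 m' rfl x hx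

theorem stuck_last {l : List (V ⊕ Fin k ⊕ Fin k × Fin (k * Fintype.card V))} (hc : l.Chain' (fun u v => (u, v) ∈ tailEdges E s t))
    {i : Fin k} (m) (hm : inTail i m ∈ l) :
    ∃ m', l.getLast? = some (inTail i m') := by
  induction l generalizing m with
  | nil => simp at hm
  | cons a l ih =>
    cases l with
    | nil =>
      simp only [List.mem_singleton] at hm
      exact ⟨m, by simp [hm]⟩
    | cons b l =>
      rcases List.mem_cons.mp hm with rfl | hm'
      · have he : (inTail i m, b) ∈ tailEdges E s t := (List.isChain_cons_cons.mp hc).1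
        obtain ⟨m', -, rfl⟩ := (edge_from_tail E s t).mp he
        obtain ⟨m'', h⟩ := ih (List.isChain_cons_cons.mp hc).2 m' (List.mem_cons_self)
        exact ⟨m'', by rw [List.getLast?_cons_cons]; exact h⟩
      · obtain ⟨m'', h⟩ := ih (List.isChain_cons_cons.mp hc).2 m hm'
        exact ⟨m'', by rw [List.getLast?_cons_cons]; exact h⟩

theorem outdeg_zero_iff {W : Type} [DecidableEq W] (F : Finset (W × W)) (v : W) :
    outdeg F v = 0 ↔ ∀ x, (v, x) ∉ F := by
  unfold outdeg
  rw [Finset.card_eq_zero, Finset.filter_eq_empty_iff]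
  constructor
  · intro h x hx
    exact h hx rfl
  · rintro h ⟨a, b⟩ hab hv
    simp only at hv
    subst hv
    exact h b hab

theorem outdeg_lastTail (i : Fin k) (m : Fin (k * Fintype.card V)) (hm : (m : ℕ) + 1 = k * Fintype.card V) :
    outdeg (tailEdges E s t) (inTail i m) = 0 := by
  rw [outdeg_zero_iff]
  intro x hx
  obtain ⟨m', hm', -⟩ := (edge_from_tail E s t).mp hx
  have := m'.isLt
  omega

theorem outdeg_inl_pos (hac : AntConservation E k s t)
    (hN : 0 < k * Fintype.card V) (v : V) :
    outdeg (tailEdges E s t) (Sum.inl v) ≠ 0 := by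
  rw [Ne, outdeg_zero_iff]
  push_neg
  by_cases h : outdeg E v = 0
  · obtain ⟨j, hj⟩ := (hac.dests v).mp h
    refine ⟨inTail j ⟨0, hN⟩, (edge_from_inl E s t).mpr (Or.inr ⟨j, ⟨0, hN⟩, rfl, hj.symm, rfl⟩)⟩
  · rw [outdeg_zero_iff] at h
    push_neg at h
    obtain ⟨x, hx⟩ := h
    exact ⟨Sum.inl x, (edge_from_inl E s t).mpr (Or.inl ⟨x, rfl, hx⟩)⟩

theorem listWeight_eq_card {W : Type} [DecidableEq W] (wt : W × W → ℕ) (p r : List W)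
    (hp : p.Nodup)
    (h1 : ∀ e ∈ pathEdges r, wt e = 1) (h0 : ∀ e, e ∉ pathEdges r → wt e = 0) :
    listWeight wt p = ((pathEdges p).toFinset ∩ (pathEdges r).toFinset).card := by
  unfold listWeight
  rw [← List.sum_toFinset _ (pathEdges_nodup hp)]
  have : ∀ e ∈ (pathEdges p).toFinset, wt e =
      if e ∈ (pathEdges r).toFinset then 1 else 0 := by
    intro e _
    by_cases he : e ∈ pathEdges r
    · simp [List.mem_toFinset.mpr he, h1 e he]
    · rw [h0 e he, if_neg (fun h => he (List.mem_toFinset.mp h))]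
  rw [Finset.sum_congr rfl this, Finset.sum_ite_mem]
  simp


theorem tail_edges_mem_R {i : Fin k}
    {r : List (V ⊕ Fin k ⊕ Fin k × Fin (k * Fintype.card V))}
    (hch : r.Chain' (fun u v => (u, v) ∈ tailEdges E s t))
    (hhead : r.head? = some (Sum.inr (Sum.inl i)))
    {m₀ : Fin (k * Fintype.card V)} (hm₀ : (m₀ : ℕ) + 1 = k * Fintype.card V)
    (hlast : r.getLast? = some (inTail i m₀)) :
    ∀ m : Fin (k * Fintype.card V), (predV t i m, inTail i m) ∈ pathEdges r := by
  have hmem : ∀ c : ℕ, ∀ m : Fin (k * Fintype.card V),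
      (m : ℕ) + c + 1 = k * Fintype.card V → inTail i m ∈ r := by
    intro c
    induction c with
    | zero =>
      intro m hm
      have : m = m₀ := Fin.ext (by omega)
      subst this
      exact List.mem_of_getLast? hlast
    | succ c ih =>
      intro m hm
      have hlt : (m : ℕ) + 1 < k * Fintype.card V := by omega
      have h1 : inTail i ⟨(m : ℕ) + 1, hlt⟩ ∈ r := by
        apply ih
        rw [show ((⟨(m : ℕ) + 1, hlt⟩ : Fin (k * Fintype.card V)) : ℕ) = (m : ℕ) + 1 from rfl]
        omega
      have h2 : inTail i ⟨(m : ℕ) + 1, hlt⟩ ∈ r.tail :=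
        mem_tail_of_ne_head hhead h1 (by simp [inTail])
      obtain ⟨u, hu⟩ := exists_pred_of_mem_tail h2
      have hpe := (edge_into_tail E s t).mp (chain'_pathEdges hch hu)
      subst hpe
      have hpv : predV t i ⟨(m : ℕ) + 1, hlt⟩ = inTail i m := by
        simp only [predV]
        rw [dif_neg (by simp)]
        exact congrArg (inTail i) (Fin.ext (by simp))
      rw [hpv] at hu
      exact List.mem_of_mem_dropLast (fst_mem_dropLast hu)
  intro m
  have h1 : inTail i m ∈ r :=
    hmem (k * Fintype.card V - 1 - (m : ℕ)) m (by have := m.isLt; omega)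
  have h2 : inTail i m ∈ r.tail := mem_tail_of_ne_head hhead h1 (by simp [inTail])
  obtain ⟨u, hu⟩ := exists_pred_of_mem_tail h2
  have hpe := (edge_into_tail E s t).mp (chain'_pathEdges hch hu)
  subst hpe
  exact hu


theorem forward_dir
    (R : Fin k → List (V ⊕ Fin k ⊕ Fin k × Fin (k * Fintype.card V)))
    (t' : Fin k → V ⊕ Fin k ⊕ Fin k × Fin (k * Fintype.card V))
    (ht' : ∀ i, IsLastTail i (t' i))
    (hR : ∀ i, IsPathFrom (tailEdges E s t) (R i) (Sum.inr (Sum.inl i)) (t' i))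
    (w : Fin k → (V ⊕ Fin k ⊕ Fin k × Fin (k * Fintype.card V)) ×
                 (V ⊕ Fin k ⊕ Fin k × Fin (k * Fintype.card V)) → ℕ)
    (hw : ∀ i e, (e ∈ pathEdges (R i) → w i e = 1) ∧ (e ∉ pathEdges (R i) → w i e = 0))
    (Q : Fin k → List V) (hdisj : EdgeDisjoint Q)
    (hQ : ∀ i, IsPathFrom E (Q i) (s i) (t i)) :
    ∃ P : Fin k → List (V ⊕ Fin k ⊕ Fin k × Fin (k * Fintype.card V)),
      EdgeDisjoint P ∧
      (∀ i, ∃ z, outdeg (tailEdges E s t) z = 0 ∧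
        IsPathFrom (tailEdges E s t) (P i) (Sum.inr (Sum.inl i)) z) ∧
      k ^ 2 * Fintype.card V ≤ ∑ i, listWeight (w i) (P i) := by
  rcases Nat.eq_zero_or_pos k with rfl | hk
  · exact ⟨fun i => i.elim0, fun i => i.elim0, fun i => i.elim0, by simp⟩
  have hV : 0 < Fintype.card V := Fintype.card_pos_iff.mpr ⟨s ⟨0, hk⟩⟩
  have hN : 0 < k * Fintype.card V := Nat.mul_pos hk hV
  set m0 : Fin (k * Fintype.card V) := ⟨0, hN⟩ with hm0def
  set mL : Fin (k * Fintype.card V) := ⟨k * Fintype.card V - 1, by omega⟩ with hmLdef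
  set tSeg : Fin k → List (V ⊕ Fin k ⊕ Fin k × Fin (k * Fintype.card V)) :=
    fun i => (List.finRange (k * Fintype.card V)).map (inTail i) with htSeg
  set P : Fin k → List (V ⊕ Fin k ⊕ Fin k × Fin (k * Fintype.card V)) :=
    fun i => Sum.inr (Sum.inl i) :: ((Q i).map Sum.inl ++ tSeg i) with hPdef
  have hQne : ∀ i, Q i ≠ [] := fun i => (hQ i).1.1
  have hQnd : ∀ i, (Q i).Nodup := fun i => (hQ i).1.2.1
  have hQch : ∀ i, (Q i).Chain' (fun u v => (u, v) ∈ E) := fun i => (hQ i).1.2.2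
  have hQhead : ∀ i, (Q i).head? = some (s i) := fun i => (hQ i).2.1
  have hQlast : ∀ i, (Q i).getLast? = some (t i) := fun i => (hQ i).2.2
  have htSegne : ∀ i, tSeg i ≠ [] := fun i => by
    apply List.ne_nil_of_length_pos
    simpa [htSeg] using hN
  have hMne : ∀ i, ((Q i).map Sum.inl :
      List (V ⊕ Fin k ⊕ Fin k × Fin (k * Fintype.card V))) ≠ [] := fun i => by
    simp [hQne i]
  have htSeghead : ∀ i, (tSeg i).head? = some (inTail i m0) := fun i => by
    rw [htSeg]
    simp only [List.head?_map]
    rw [List.head?_eq_getElem?, List.getElem?_eq_getElem (by simpa using hN)]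
    simp [hm0def, Fin.ext_iff]
  have htSeglast : ∀ i, (tSeg i).getLast? = some (inTail i mL) := fun i => by
    rw [htSeg]
    simp only [List.getLast?_map]
    rw [List.getLast?_eq_getElem?,
      List.getElem?_eq_getElem (by simp; omega)]
    simp [hmLdef, Fin.ext_iff]
  have htSegnd : ∀ i, (tSeg i).Nodup := fun i =>
    (List.nodup_finRange _).map (fun a b h => (inTail_injective2 h).2)
  have htSegch : ∀ i, (tSeg i).Chain' (fun u v => (u, v) ∈ tailEdges E s t) := fun i => by
    rw [htSeg]
    simp only [List.Chain']
    rw [List.isChain_map, List.isChain_iff_getElem]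
    intro a ha
    simp only [List.length_finRange] at ha
    rw [mem_tailEdges]
    simp [tailAdj, inTail, List.get_eq_getElem]
  have hMhead : ∀ i, ((Q i).map Sum.inl :
      List (V ⊕ Fin k ⊕ Fin k × Fin (k * Fintype.card V))).head?
      = some (Sum.inl (s i)) := fun i => by
    rw [List.head?_map, hQhead i]; rfl
  have hMlast : ∀ i, ((Q i).map Sum.inl :
      List (V ⊕ Fin k ⊕ Fin k × Fin (k * Fintype.card V))).getLast?
      = some (Sum.inl (t i)) := fun i => by
    rw [List.getLast?_map, hQlast i]; rfl
  have hLhead : ∀ i, ((Q i).map Sum.inl ++ tSeg i).head? = some (Sum.inl (s i)) := fun i => by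
    rw [List.head?_append_of_ne_nil _ (hMne i), hMhead i]
  have hPhead : ∀ i, (P i).head? = some (Sum.inr (Sum.inl i)) := fun i => by
    simp [hPdef]
  have hPlast : ∀ i, (P i).getLast? = some (inTail i mL) := fun i => by
    rw [hPdef]
    show (((Sum.inr (Sum.inl i)) :: (Q i).map Sum.inl) ++ tSeg i).getLast? = _
    rw [List.getLast?_append_of_ne_nil _ (htSegne i), htSeglast i]
  have hPnd : ∀ i, (P i).Nodup := fun i => by
    rw [hPdef]
    refine List.nodup_cons.mpr ⟨?_, ?_⟩
    · intro hmem
      rcases List.mem_append.mp hmem with h | h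
      · obtain ⟨a, -, ha⟩ := List.mem_map.mp h
        exact absurd ha (by simp)
      · rw [htSeg] at h
        obtain ⟨a, -, ha⟩ := List.mem_map.mp h
        exact absurd ha (by simp [inTail])
    · refine List.Nodup.append ((hQnd i).map Sum.inl_injective) (htSegnd i) ?_
      intro x hx hx'
      obtain ⟨a, -, rfl⟩ := List.mem_map.mp hx
      rw [htSeg] at hx'
      obtain ⟨b, -, hb⟩ := List.mem_map.mp hx'
      exact absurd hb (by simp [inTail])
  have hPch : ∀ i, (P i).Chain' (fun u v => (u, v) ∈ tailEdges E s t) := fun i => by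
    rw [hPdef]
    refine List.isChain_cons.mpr ⟨?_, ?_⟩
    · intro y hy
      rw [hLhead i] at hy
      simp only [Option.mem_some_iff] at hy
      subst hy
      exact (edge_from_source E s t).mpr rfl
    · refine List.isChain_append.mpr ⟨?_, htSegch i, ?_⟩
      · rw [List.isChain_map]
        exact List.IsChain.imp (fun a b hab => by
          rw [mem_tailEdges]; simp [tailAdj, hab]) (hQch i)
      · intro x hx y hy
        rw [hMlast i] at hx
        rw [htSeghead i] at hy
        simp only [Option.mem_some_iff] at hx hy
        subst hx; subst hy
        rw [mem_tailEdges]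
        simp [tailAdj, inTail, hm0def]
  have hPE : ∀ i, pathEdges (P i) =
      (Sum.inr (Sum.inl i), Sum.inl (s i)) ::
        (((pathEdges (Q i)).map (Prod.map Sum.inl Sum.inl)) ++
          (Sum.inl (t i), inTail i m0) ::
            (pathEdges (List.finRange (k * Fintype.card V))).map
              (Prod.map (inTail i) (inTail i))) := by
    intro i
    have h1 : (Q i).map Sum.inl ++ tSeg i ≠ [] := by
      simp [hQne i]
    have e1 : ((Q i).map Sum.inl ++ tSeg i).head h1 = Sum.inl (s i) := by
      have h := List.head?_eq_head h1
      rw [hLhead i] at h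
      exact (Option.some.inj h).symm
    have e2 : ((Q i).map Sum.inl :
        List (V ⊕ Fin k ⊕ Fin k × Fin (k * Fintype.card V))).getLast (hMne i)
        = Sum.inl (t i) := by
      have h := List.getLast?_eq_getLast (hMne i)
      rw [hMlast i] at h
      exact (Option.some.inj h).symm
    have e3 : (tSeg i).head (htSegne i) = inTail i m0 := by
      have h := List.head?_eq_head (htSegne i)
      rw [htSeghead i] at h
      exact (Option.some.inj h).symm
    rw [hPdef]
    show pathEdges (Sum.inr (Sum.inl i) :: ((Q i).map Sum.inl ++ tSeg i)) = _
    rw [pathEdges_cons _ _ h1, e1,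
      pathEdges_append _ _ (hMne i) (htSegne i), e2, e3,
      pathEdges_map, show tSeg i = (List.finRange (k * Fintype.card V)).map (inTail i)
        from by rw [htSeg], pathEdges_map]
  have hwt : ∀ i, k * Fintype.card V ≤ listWeight (w i) (P i) := by
    intro i
    rw [listWeight_eq_card (w i) (P i) (R i) (hPnd i)
      (fun e he => (hw i e).1 he) (fun e => (hw i e).2)]
    have hinj : Function.Injective
        (fun m : Fin (k * Fintype.card V) => (predV t i m, inTail i m)) :=
      fun a b h => (inTail_injective2 (congrArg Prod.snd h)).2
    have hcard : (Finset.univ.image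
        (fun m : Fin (k * Fintype.card V) => (predV t i m, inTail i m))).card
        = k * Fintype.card V := by
      rw [Finset.card_image_of_injective _ hinj, Finset.card_univ, Fintype.card_fin]
    refine le_trans (le_of_eq hcard.symm) (Finset.card_le_card ?_)
    intro e he
    rw [Finset.mem_image] at he
    obtain ⟨m, -, rfl⟩ := he
    rw [Finset.mem_inter, List.mem_toFinset, List.mem_toFinset]
    constructor
    · rw [hPE i]
      by_cases h0 : (m : ℕ) = 0
      · have hm : m = m0 := Fin.ext (by rw [hm0def]; exact h0)
        have hp : predV t i m = Sum.inl (t i) := by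
          simp only [predV]; rw [dif_pos h0]
        rw [hp, hm]
        exact List.mem_cons_of_mem _
          (List.mem_append_right _ (List.mem_cons_self))
      · have ha : ((m : ℕ) - 1) + 1 < k * Fintype.card V := by
          have := m.isLt; omega
        have hmm := mem_pathEdges_getElem (List.finRange (k * Fintype.card V))
          ((m : ℕ) - 1) (by simpa using ha)
        refine List.mem_cons_of_mem _ (List.mem_append_right _
          (List.mem_cons_of_mem _ (List.mem_map.mpr ⟨_, hmm, ?_⟩)))
        have hv : predV t i m = inTail i ⟨(m : ℕ) - 1, by omega⟩ := by
          simp only [predV]; rw [dif_neg h0]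
        rw [hv]
        simp only [Prod.map, List.getElem_finRange]
        exact congrArg₂ Prod.mk
          (congrArg (inTail i) (Fin.ext (by simp)))
          (congrArg (inTail i) (Fin.ext (by simp; omega)))
    · obtain ⟨m₁, hm₁, hz⟩ := ht' i
      have hlast : (R i).getLast? = some (inTail i m₁) := by
        rw [(hR i).2.2, hz]; rfl
      exact tail_edges_mem_R E s t (hR i).1.2.2 (hR i).2.1 hm₁ hlast m
  refine ⟨P, ?_, ?_, ?_⟩
  · intro i j hij e hei hej
    rw [hPE i] at hei
    rw [hPE j] at hej
    simp only [List.mem_cons, List.mem_append, List.mem_map] at hei hej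
    rcases hei with rfl | ⟨a, ha, rfl⟩ | rfl | ⟨a, ha, rfl⟩ <;>
      rcases hej with heq | ⟨b, hb, heq⟩ | heq | ⟨b, hb, heq⟩
    · simp only [Prod.mk.injEq, Sum.inr.injEq, Sum.inl.injEq] at heq
      exact hij heq.1
    · exact absurd heq (by simp [Prod.ext_iff, Prod.map])
    · exact absurd heq (by simp [Prod.ext_iff])
    · exact absurd heq (by simp [Prod.ext_iff, Prod.map, inTail])
    · exact absurd heq (by simp [Prod.ext_iff, Prod.map])
    · have hab : b = a := by
        have h1 := congrArg Prod.fst heq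
        have h2 := congrArg Prod.snd heq
        simp only [Prod.map, Sum.inl.injEq] at h1 h2
        exact Prod.ext h1 h2
      exact hdisj i j hij a ha (hab ▸ hb)
    · exact absurd heq (by simp [Prod.ext_iff, Prod.map, inTail])
    · exact absurd heq (by simp [Prod.ext_iff, Prod.map, inTail])
    · exact absurd heq (by simp [Prod.ext_iff])
    · exact absurd heq (by simp [Prod.ext_iff, Prod.map, inTail])
    · simp only [Prod.mk.injEq, inTail, Sum.inr.injEq, Prod.mk.injEq] at heq
      exact hij heq.2.1
    · exact absurd heq (by simp [Prod.ext_iff, Prod.map, inTail])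
    · exact absurd heq (by simp [Prod.ext_iff, Prod.map, inTail])
    · exact absurd heq (by simp [Prod.ext_iff, Prod.map, inTail])
    · exact absurd heq (by simp [Prod.ext_iff, Prod.map, inTail])
    · have hab : (Prod.map (inTail j) (inTail j) b).1 = (Prod.map (inTail i) (inTail i) a).1 := by
        rw [heq]
      simp only [Prod.map, inTail, Sum.inr.injEq, Prod.mk.injEq] at hab
      exact hij hab.1.symm
  · intro i
    exact ⟨inTail i mL, outdeg_lastTail E s t i mL (by rw [hmLdef]; simp; omega),
      ⟨⟨by rw [hPdef]; simp, hPnd i, hPch i⟩, hPhead i, hPlast i⟩⟩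
  · have hsum : (∑ _i : Fin k, k * Fintype.card V) = k ^ 2 * Fintype.card V := by
      rw [Finset.sum_const, Finset.card_univ, Fintype.card_fin, smul_eq_mul]
      ring
    exact hsum ▸ Finset.sum_le_sum (fun i _ => hwt i)


theorem edge_inl_inl {u v : V} :
    ((Sum.inl u : V ⊕ Fin k ⊕ Fin k × Fin (k * Fintype.card V)), Sum.inl v)
      ∈ tailEdges E s t ↔ (u, v) ∈ E := by
  rw [mem_tailEdges]; simp [tailAdj]

theorem arith_lemma (k c a b : ℕ) (hk : 0 < k) (hc : 0 < c) (ha : a + 1 ≤ c)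
    (hb : b ≤ (k - 1) * (c + k * c)) : a + b < k ^ 2 * c := by
  obtain ⟨k', rfl⟩ : ∃ k', k = k' + 1 := ⟨k - 1, by omega⟩
  simp only [Nat.add_sub_cancel] at hb
  nlinarith [hb, ha]

theorem backward_dir (hac : AntConservation E k s t)
    (R : Fin k → List (V ⊕ Fin k ⊕ Fin k × Fin (k * Fintype.card V)))
    (t' : Fin k → V ⊕ Fin k ⊕ Fin k × Fin (k * Fintype.card V))
    (ht' : ∀ i, IsLastTail i (t' i))
    (hR : ∀ i, IsPathFrom (tailEdges E s t) (R i) (Sum.inr (Sum.inl i)) (t' i))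
    (w : Fin k → (V ⊕ Fin k ⊕ Fin k × Fin (k * Fintype.card V)) ×
                 (V ⊕ Fin k ⊕ Fin k × Fin (k * Fintype.card V)) → ℕ)
    (hw : ∀ i e, (e ∈ pathEdges (R i) → w i e = 1) ∧ (e ∉ pathEdges (R i) → w i e = 0))
    (P : Fin k → List (V ⊕ Fin k ⊕ Fin k × Fin (k * Fintype.card V)))
    (hdisjP : EdgeDisjoint P)
    (hP : ∀ i, ∃ z, outdeg (tailEdges E s t) z = 0 ∧
      IsPathFrom (tailEdges E s t) (P i) (Sum.inr (Sum.inl i)) z)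
    (hsum : k ^ 2 * Fintype.card V ≤ ∑ i, listWeight (w i) (P i)) :
    ∃ Q : Fin k → List V, EdgeDisjoint Q ∧ ∀ i, IsPathFrom E (Q i) (s i) (t i) := by
  rcases Nat.eq_zero_or_pos k with rfl | hk
  · exact ⟨fun i => i.elim0, fun i => i.elim0, fun i => i.elim0⟩
  have hV : 0 < Fintype.card V := Fintype.card_pos_iff.mpr ⟨s ⟨0, hk⟩⟩
  have hN : 0 < k * Fintype.card V := Nat.mul_pos hk hV
  set m0 : Fin (k * Fintype.card V) := ⟨0, hN⟩ with hm0def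
  choose z hz hPz using hP
  have hPne : ∀ i, P i ≠ [] := fun i => (hPz i).1.1
  have hPnd : ∀ i, (P i).Nodup := fun i => (hPz i).1.2.1
  have hPch : ∀ i, (P i).Chain' (fun u v => (u, v) ∈ tailEdges E s t) :=
    fun i => (hPz i).1.2.2
  have hPhead : ∀ i, (P i).head? = some (Sum.inr (Sum.inl i)) := fun i => (hPz i).2.1
  have hPlastq : ∀ i, (P i).getLast? = some (z i) := fun i => (hPz i).2.2
  have hRnd : ∀ i, (R i).Nodup := fun i => (hR i).1.2.1
  have hRch : ∀ i, (R i).Chain' (fun u v => (u, v) ∈ tailEdges E s t) :=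
    fun i => (hR i).1.2.2
  have hPsub : ∀ i e, e ∈ pathEdges (P i) → e ∈ tailEdges E s t := by
    intro i e he
    obtain ⟨a, b⟩ := e
    exact chain'_pathEdges (hPch i) he
  have hRsub : ∀ i e, e ∈ pathEdges (R i) → e ∈ tailEdges E s t := by
    intro i e he
    obtain ⟨a, b⟩ := e
    exact chain'_pathEdges (hRch i) he
  -- targets of edges of R i are original vertices or tail-i vertices
  have hRtarget : ∀ i e, e ∈ pathEdges (R i) →
      (∃ v : V, e.2 = Sum.inl v) ∨ (∃ m, e.2 = inTail i m) := by
    intro i e he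
    obtain ⟨a, b⟩ := e
    rcases b with v | j | ⟨j, m⟩
    · exact Or.inl ⟨v, rfl⟩
    · exact absurd (hRsub i _ he) (no_edge_into_source E s t)
    · right
      have hb : inTail j m ∈ R i :=
        List.mem_of_mem_tail (snd_mem_tail he)
      obtain ⟨m', hm'⟩ := stuck_last E s t (hRch i) m hb
      obtain ⟨m₁, hm₁, hz₁⟩ := ht' i
      rw [(hR i).2.2, hz₁] at hm'
      have : inTail i m₁ = inTail j m' := Option.some.inj hm'
      obtain ⟨rfl, -⟩ := inTail_injective2 this
      exact ⟨m, rfl⟩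
  set A : Fin k → Finset ((V ⊕ Fin k ⊕ Fin k × Fin (k * Fintype.card V)) ×
      (V ⊕ Fin k ⊕ Fin k × Fin (k * Fintype.card V))) :=
    fun i => (pathEdges (P i)).toFinset ∩ (pathEdges (R i)).toFinset with hA
  have hwA : ∀ i, listWeight (w i) (P i) = (A i).card := fun i =>
    listWeight_eq_card (w i) (P i) (R i) (hPnd i)
      (fun e he => (hw i e).1 he) (fun e => (hw i e).2)
  have hAmemP : ∀ i e, e ∈ A i → e ∈ pathEdges (P i) := by
    intro i e he
    rw [hA] at he
    exact List.mem_toFinset.mp (Finset.mem_inter.mp he).1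
  have hAmemR : ∀ i e, e ∈ A i → e ∈ pathEdges (R i) := by
    intro i e he
    rw [hA] at he
    exact List.mem_toFinset.mp (Finset.mem_inter.mp he).2
  have hAcard : ∀ i, (A i).card = ((A i).image Prod.snd).card := by
    intro i
    refine (Finset.card_image_of_injOn ?_).symm
    intro e he e' he' h
    exact snd_injOn (hRnd i) (hAmemR i e he) (hAmemR i e' he') h
  have hA_le : ∀ i, (A i).card ≤ Fintype.card V + k * Fintype.card V := by
    intro i
    rw [hAcard i]
    have hsub : (A i).image Prod.snd ⊆
        (Finset.univ.image (Sum.inl : V → V ⊕ Fin k ⊕ Fin k × Fin (k * Fintype.card V)))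
          ∪ (Finset.univ.image (inTail i)) := by
      intro x hx
      obtain ⟨e, he, rfl⟩ := Finset.mem_image.mp hx
      rcases hRtarget i e (hAmemR i e he) with ⟨v, hv⟩ | ⟨m, hm⟩
      · exact Finset.mem_union_left _ (Finset.mem_image.mpr ⟨v, Finset.mem_univ v, hv.symm⟩)
      · exact Finset.mem_union_right _ (Finset.mem_image.mpr ⟨m, Finset.mem_univ m, hm.symm⟩)
    refine le_trans (Finset.card_le_card hsub) (le_trans (Finset.card_union_le _ _) ?_)
    have h1 : (Finset.univ.image
        (Sum.inl : V → V ⊕ Fin k ⊕ Fin k × Fin (k * Fintype.card V))).card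
        = Fintype.card V := by
      rw [Finset.card_image_of_injective _ Sum.inl_injective, Finset.card_univ]
    have h2 : (Finset.univ.image (inTail i : Fin (k * Fintype.card V) →
        V ⊕ Fin k ⊕ Fin k × Fin (k * Fintype.card V))).card = k * Fintype.card V := by
      rw [Finset.card_image_of_injective _ (fun a b h => (inTail_injective2 h).2),
        Finset.card_univ, Fintype.card_fin]
    omega
  -- key claim: every P i contains the entry edge of tail i
  have hkey : ∀ i, (Sum.inl (t i), inTail i m0) ∈ pathEdges (P i) := by
    by_contra hcon
    push_neg at hcon
    obtain ⟨i0, hi0⟩ := hcon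
    -- no edge of P i0 has target in tail i0
    have hbase : ∀ (m : Fin (k * Fintype.card V)), (m : ℕ) = 0 →
        ∀ x, (x, inTail i0 m) ∉ pathEdges (P i0) := by
      intro m h0 x hx
      have hpe := (edge_into_tail E s t).mp (hPsub i0 _ hx)
      rw [hpe] at hx
      have hmv : m = m0 := Fin.ext (by rw [hm0def]; exact h0)
      have hpv : predV t i0 m = Sum.inl (t i0) := by
        simp only [predV]; rw [dif_pos h0]
      rw [hpv, hmv] at hx
      exact hi0 hx
    have hC : ∀ (n : ℕ) (m : Fin (k * Fintype.card V)), (m : ℕ) ≤ n →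
        ∀ x, (x, inTail i0 m) ∉ pathEdges (P i0) := by
      intro n
      induction n with
      | zero =>
        intro m hm x hx
        exact hbase m (by omega) x hx
      | succ n ih =>
        intro m hm x hx
        by_cases h0 : (m : ℕ) = 0
        · exact hbase m h0 x hx
        · have hpe := (edge_into_tail E s t).mp (hPsub i0 _ hx)
          subst hpe
          have hxv : predV t i0 m = inTail i0 ⟨(m : ℕ) - 1, by have := m.isLt; omega⟩ := by
            simp only [predV]; rw [dif_neg h0]
          rw [hxv] at hx
          have hmem : inTail i0 ⟨(m : ℕ) - 1, by have := m.isLt; omega⟩ ∈ (P i0).tail :=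
            mem_tail_of_ne_head (hPhead i0)
              (List.mem_of_mem_dropLast (fst_mem_dropLast hx)) (by simp [inTail])
          obtain ⟨y, hy⟩ := exists_pred_of_mem_tail hmem
          exact ih _ (by simp; omega) y hy
    -- the image of A i0 under snd consists of original vertices only
    have hsub0 : (A i0).image Prod.snd ⊆
        Finset.univ.image (Sum.inl : V → V ⊕ Fin k ⊕ Fin k × Fin (k * Fintype.card V)) := by
      intro x hx
      obtain ⟨e, he, rfl⟩ := Finset.mem_image.mp hx
      rcases hRtarget i0 e (hAmemR i0 e he) with ⟨v, hv⟩ | ⟨m, hm⟩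
      · exact Finset.mem_image.mpr ⟨v, Finset.mem_univ v, hv.symm⟩
      · exfalso
        have heP := hAmemP i0 e he
        obtain ⟨a, b⟩ := e
        simp only at hm
        rw [hm] at heP
        exact hC (m : ℕ) m le_rfl a heP
    have hlt : (A i0).card + 1 ≤ Fintype.card V := by
      by_contra hge
      push_neg at hge
      have hcardV : (Finset.univ.image
          (Sum.inl : V → V ⊕ Fin k ⊕ Fin k × Fin (k * Fintype.card V))).card
          = Fintype.card V := by
        rw [Finset.card_image_of_injective _ Sum.inl_injective, Finset.card_univ]
      have heq : (A i0).image Prod.snd =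
          Finset.univ.image (Sum.inl : V → V ⊕ Fin k ⊕ Fin k × Fin (k * Fintype.card V)) := by
        apply Finset.eq_of_subset_of_card_le hsub0
        rw [hcardV, ← hAcard i0]
        omega
      have hmem : (Sum.inl (t i0) : V ⊕ Fin k ⊕ Fin k × Fin (k * Fintype.card V))
          ∈ (A i0).image Prod.snd := by
        rw [heq]
        exact Finset.mem_image.mpr ⟨t i0, Finset.mem_univ _, rfl⟩
      obtain ⟨e, he, he2⟩ := Finset.mem_image.mp hmem
      obtain ⟨a, b⟩ := e
      simp only at he2
      subst he2
      have hbP : (Sum.inl (t i0) : V ⊕ Fin k ⊕ Fin k × Fin (k * Fintype.card V)) ∈ P i0 :=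
        List.mem_of_mem_tail (snd_mem_tail (hAmemP i0 _ he))
      -- t i0 is not the last vertex of P i0
      have hzne : (Sum.inl (t i0) : V ⊕ Fin k ⊕ Fin k × Fin (k * Fintype.card V)) ≠ z i0 := by
        intro hzz
        exact outdeg_inl_pos E s t hac hN (t i0) (hzz ▸ hz i0)
      have hlastv : (P i0).getLast (hPne i0) = z i0 := by
        have h := List.getLast?_eq_getLast (hPne i0)
        rw [hPlastq i0] at h
        exact (Option.some.inj h).symm
      have hdl : (Sum.inl (t i0) : V ⊕ Fin k ⊕ Fin k × Fin (k * Fintype.card V))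
          ∈ (P i0).dropLast :=
        mem_dropLast_of_ne_getLast hbP (hPne i0) (by rw [hlastv]; exact hzne)
      obtain ⟨y, hy⟩ := exists_succ_of_mem_dropLast hdl
      rcases (edge_from_inl E s t).mp (hPsub i0 _ hy) with ⟨v, -, hEv⟩ | ⟨j, m, hmm, htj, hyv⟩
      · have hout : outdeg E (t i0) = 0 := (hac.dests (t i0)).mpr ⟨i0, rfl⟩
        exact (outdeg_zero_iff E (t i0)).mp hout v hEv
      · have hij : i0 = j := hac.t_inj htj
        subst hij
        have hmv : m = m0 := Fin.ext (by rw [hm0def]; exact hmm)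
        rw [hyv, hmv] at hy
        exact hi0 hy
    -- sum bound contradiction
    have hrest : ∑ i ∈ Finset.univ.erase i0, (A i).card ≤
        (k - 1) * (Fintype.card V + k * Fintype.card V) := by
      have hcarde : (Finset.univ.erase i0).card = k - 1 := by
        rw [Finset.card_erase_of_mem (Finset.mem_univ _), Finset.card_univ, Fintype.card_fin]
      calc ∑ i ∈ Finset.univ.erase i0, (A i).card
          ≤ ∑ _i ∈ Finset.univ.erase i0, (Fintype.card V + k * Fintype.card V) :=
            Finset.sum_le_sum (fun i _ => hA_le i)
        _ = (k - 1) * (Fintype.card V + k * Fintype.card V) := by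
            rw [Finset.sum_const, hcarde, smul_eq_mul]
    have hdecomp : ∑ i, (A i).card
        = (A i0).card + ∑ i ∈ Finset.univ.erase i0, (A i).card := by
      rw [← Finset.add_sum_erase _ _ (Finset.mem_univ i0)]
    have hsum' : k ^ 2 * Fintype.card V ≤ ∑ i, (A i).card := by
      calc k ^ 2 * Fintype.card V ≤ ∑ i, listWeight (w i) (P i) := hsum
        _ = ∑ i, (A i).card := Finset.sum_congr rfl (fun i _ => hwA i)
    have := arith_lemma k (Fintype.card V) (A i0).card
      (∑ i ∈ Finset.univ.erase i0, (A i).card) hk hV hlt hrest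
    omega
  -- extraction of the original paths
  have hmain : ∀ i, ∃ q : List V, IsPathFrom E q (s i) (t i) ∧
      ∀ e ∈ pathEdges q, Prod.map Sum.inl Sum.inl e ∈ pathEdges (P i) := by
    intro i
    have hent := hkey i
    obtain ⟨x, r, hcons⟩ := List.exists_cons_of_ne_nil (hPne i)
    have hx : x = Sum.inr (Sum.inl i) := by
      have h := hPhead i
      rw [hcons] at h
      simpa using h
    subst hx
    have hentr : (Sum.inl (t i), inTail i m0) ∈ pathEdges (Sum.inr (Sum.inl i) :: r) :=
      hcons ▸ hent
    have hchP : (Sum.inr (Sum.inl i) :: r).Chain' (fun u v => (u, v) ∈ tailEdges E s t) :=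
      hcons ▸ hPch i
    have hndP : (Sum.inr (Sum.inl i) :: r).Nodup := hcons ▸ hPnd i
    have hrne : r ≠ [] := by
      rintro rfl
      simp [pathEdges_single] at hentr
    have hchr : r.Chain' (fun u v => (u, v) ∈ tailEdges E s t) :=
      (List.isChain_cons.mp hchP).2
    obtain ⟨x0, r', rfl⟩ := List.exists_cons_of_ne_nil hrne
    have hx0 : x0 = Sum.inl (s i) := by
      have h := (List.isChain_cons.mp hchP).1 x0 rfl
      exact (edge_from_source E s t).mp h
    subst hx0
    set pleft : (V ⊕ Fin k ⊕ Fin k × Fin (k * Fintype.card V)) → Bool :=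
      fun x => x.isLeft with hpleft
    set q0 := (Sum.inl (s i) :: r').takeWhile pleft with hq0
    set d := (Sum.inl (s i) :: r').dropWhile pleft with hd0
    have hrd : q0 ++ d = Sum.inl (s i) :: r' := List.takeWhile_append_dropWhile ..
    have hq0eq : q0 = Sum.inl (s i) :: r'.takeWhile pleft := by
      rw [hq0, List.takeWhile_cons_of_pos (by rw [hpleft]; rfl)]
    have hq0ne : q0 ≠ [] := by rw [hq0eq]; simp
    have hq0head : q0.head? = some (Sum.inl (s i)) := by rw [hq0eq]; rfl
    have hq0left : ∀ y ∈ q0, y.isLeft := fun y hy => List.mem_takeWhile_imp (hq0 ▸ hy)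
    have hq0pfx : q0 <+: (Sum.inl (s i) :: r') := hq0 ▸ List.takeWhile_prefix _
    have hq0inf : q0 <:+: (Sum.inr (Sum.inl i) :: Sum.inl (s i) :: r') := by
      obtain ⟨u, hu⟩ := hq0pfx
      exact ⟨[Sum.inr (Sum.inl i)], u, by simp [hu]⟩
    have hq0sub : ∀ e ∈ pathEdges q0,
        e ∈ pathEdges (Sum.inr (Sum.inl i) :: Sum.inl (s i) :: r') :=
      fun e he => pathEdges_infix hq0inf he
    have hq0nd : q0.Nodup := (hq0pfx.sublist.cons _).nodup hndP
    have hq0ch : q0.Chain' (fun u v => (u, v) ∈ tailEdges E s t) := hchr.prefix hq0pfx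
    have htiP : Sum.inl (t i) ∈ Sum.inl (s i) :: r' := by
      have h1 := List.mem_of_mem_dropLast (fst_mem_dropLast hentr)
      rcases List.mem_cons.mp h1 with h | h
      · exact absurd h (by simp)
      · exact h
    have hti_q0 : Sum.inl (t i) ∈ q0 := by
      by_contra hmem
      have hd' : Sum.inl (t i) ∈ d := by
        rw [← hrd] at htiP
        rcases List.mem_append.mp htiP with h | h
        · exact absurd h hmem
        · exact h
      have hdne : d ≠ [] := List.ne_nil_of_mem hd'
      have hsplit := List.isChain_append.mp (hrd ▸ hchr :
        (q0 ++ d).Chain' (fun u v => (u, v) ∈ tailEdges E s t))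
      obtain ⟨y, dtl, hdeq⟩ := List.exists_cons_of_ne_nil hdne
      have hyhead : d.head? = some y := by rw [hdeq]; rfl
      have hynl : ¬ pleft y = true := dropWhile_head_not (hd0 ▸ hyhead)
      have hedge : (q0.getLast hq0ne, y) ∈ tailEdges E s t :=
        hsplit.2.2 _ (by rw [List.getLast?_eq_getLast hq0ne]; rfl) y
          (by rw [hyhead]; rfl)
      have hleft := hq0left _ (List.getLast_mem hq0ne)
      obtain ⟨u, hu⟩ := Sum.isLeft_iff.mp hleft
      rw [hu] at hedge
      rcases (edge_from_inl E s t).mp hedge with ⟨v, hyv, -⟩ | ⟨j, m, -, -, hyv⟩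
      · exact hynl (by rw [hyv, hpleft]; rfl)
      · have hall := stuck_all E s t hsplit.2.1 m
          (by rw [hyhead, hyv]) (Sum.inl (t i)) hd'
        obtain ⟨m', hm'⟩ := hall
        exact absurd hm' (by simp [inTail])
    obtain ⟨q, hqeq⟩ := exists_map_inl hq0left
    have hq0last : q0.getLast hq0ne = Sum.inl (t i) := by
      by_contra hne2
      have hmemdl : Sum.inl (t i) ∈ q0.dropLast :=
        mem_dropLast_of_ne_getLast hti_q0 hq0ne (fun hb => hne2 hb.symm)
      obtain ⟨y, hy⟩ := exists_succ_of_mem_dropLast hmemdl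
      have hyP : (Sum.inl (t i), y) ∈
          pathEdges (Sum.inr (Sum.inl i) :: Sum.inl (s i) :: r') := hq0sub _ hy
      have huy := succ_unique hndP hyP hentr
      have hyl := hq0left y (List.mem_of_mem_tail (snd_mem_tail hy))
      rw [huy] at hyl
      simp [inTail] at hyl
    have hq0lastq : q0.getLast? = some (Sum.inl (t i)) := by
      rw [List.getLast?_eq_getLast hq0ne, hq0last]
    refine ⟨q, ⟨⟨?_, ?_, ?_⟩, ?_, ?_⟩, ?_⟩
    · rintro rfl
      simp only [List.map_nil] at hqeq
      exact hq0ne hqeq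
    · exact List.Nodup.of_map _ (hqeq ▸ hq0nd)
    · have hcq := hqeq ▸ hq0ch
      simp only [List.Chain'] at hcq
      rw [List.isChain_map] at hcq
      exact hcq.imp (fun a b hab => (edge_inl_inl E s t).mp hab)
    · have h := hq0head
      rw [hqeq, List.head?_map] at h
      cases hq' : q.head? with
      | none => rw [hq'] at h; simp at h
      | some a =>
        rw [hq'] at h
        simp only [Option.map_some, Option.some_inj, Sum.inl.injEq] at h
        rw [h]
    · have h := hq0lastq
      rw [hqeq, List.getLast?_map] at h
      cases hq' : q.getLast? with
      | none => rw [hq'] at h; simp at h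
      | some a =>
        rw [hq'] at h
        simp only [Option.map_some, Option.some_inj, Sum.inl.injEq] at h
        rw [h]
    · intro e he
      have h1 : Prod.map Sum.inl Sum.inl e ∈ pathEdges q0 := by
        rw [hqeq, pathEdges_map]
        exact List.mem_map_of_mem he
      rw [hcons]
      exact hq0sub _ h1
  choose q hq1 hq2 using hmain
  refine ⟨q, ?_, hq1⟩
  intro i j hij e he1 he2
  exact absurd (hq2 j e he2) (hdisjP i j hij _ (hq2 i e he1))

end Graph

end Stmt9Aux

/-- `G` contains `k` pairwise edge-disjoint paths, the `i`-th from `sᵢ`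
to `tᵢ`, if and only if the tail-construction graph `G'` (with indicator weights coming
from chosen paths `Rᵢ` from `sᵢ'` to `tᵢ'`) contains `k` pairwise edge-disjoint paths
`P₁, …, P_k`, with `Pᵢ` starting at `sᵢ'` and ending at some vertex of outdegree 0, of
total cost at least `k² · |V|`. -/
theorem stmt9 {V : Type} [Fintype V] [DecidableEq V] (E : Finset (V × V)) (k : ℕ)
    (s t : Fin k → V) (hacyc : Acyclic E) (hac : AntConservation E k s t)
    (t' : Fin k → V ⊕ Fin k ⊕ Fin k × Fin (k * Fintype.card V))
    (ht' : ∀ i, IsLastTail i (t' i))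
    (R : Fin k → List (V ⊕ Fin k ⊕ Fin k × Fin (k * Fintype.card V)))
    (hR : ∀ i, IsPathFrom (tailEdges E s t) (R i) (Sum.inr (Sum.inl i)) (t' i))
    (w : Fin k → (V ⊕ Fin k ⊕ Fin k × Fin (k * Fintype.card V)) ×
                 (V ⊕ Fin k ⊕ Fin k × Fin (k * Fintype.card V)) → ℕ)
    (hw : ∀ i e, (e ∈ pathEdges (R i) → w i e = 1) ∧ (e ∉ pathEdges (R i) → w i e = 0)) :
    (∃ Q : Fin k → List V, EdgeDisjoint Q ∧ ∀ i, IsPathFrom E (Q i) (s i) (t i)) ↔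
    (∃ P : Fin k → List (V ⊕ Fin k ⊕ Fin k × Fin (k * Fintype.card V)),
      EdgeDisjoint P ∧
      (∀ i, ∃ z, outdeg (tailEdges E s t) z = 0 ∧
        IsPathFrom (tailEdges E s t) (P i) (Sum.inr (Sum.inl i)) z) ∧
      k ^ 2 * Fintype.card V ≤ ∑ i, listWeight (w i) (P i)) := by
  constructor
  · rintro ⟨Q, hdisj, hQ⟩
    exact Stmt9Aux.forward_dir E s t R t' ht' hR w hw Q hdisj hQ
  · rintro ⟨P, hdisjP, hP, hsum⟩
    exact Stmt9Aux.backward_dir E s t hac R t' ht' hR w hw P hdisjP hP hsum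
end
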